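/- arXiv:2602.14500 — 12 statements merged into one kernel-verified Lean document; each statement's English description precedes it below -/
import Mathlib

section
/- Let G be a graph, k ≥ 0, and H a convex subgraph of G. If S ⊆ V(H) is a mutual k-visible set in G, then S is a mutual k-visible set in H. -/
open scoped Classical

variable {V : Type*}

/-- The number of internal vertices of a walk `p` that lie in `X`. -/
noncomputable def internalCount {G : SimpleGraph V} {u v : V}
    (p : G.Walk u v) (X : Finset V) : ℕ :=
  p.support.tail.dropLast.countP (fun x => decide (x ∈ X))

/-- `X` is a mutual `k`-visible set in `G`: every pair of distinct vertices of `X`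
admits a shortest path with at most `k` internal vertices in `X`. -/
def MutVis (G : SimpleGraph V) (X : Finset V) (k : ℕ) : Prop :=
  ∀ u ∈ X, ∀ v ∈ X, u ≠ v → ∃ p : G.Walk u v, p.IsPath ∧ p.length = G.dist u v ∧
    internalCount p X ≤ k

/-- The mutual `k`-visibility number of `G`. -/
noncomputable def muK [Fintype V] (G : SimpleGraph V) (k : ℕ) : ℕ :=
  sSup {n | ∃ X : Finset V, MutVis G X k ∧ X.card = n}

/-- A vertex set `W` is convex in `G` if every shortest path between vertices of `W`
lies entirely in `W`. -/
def GIsConvex (G : SimpleGraph V) (W : Set V) : Prop :=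
  ∀ u ∈ W, ∀ v ∈ W, ∀ p : G.Walk u v, p.IsPath → p.length = G.dist u v →
    ∀ x ∈ p.support, x ∈ W

/-- Lift a walk with support in `W` to the induced subgraph on `W`. -/
def liftWalk {G : SimpleGraph V} {W : Set V} :
    ∀ {u v : V} (p : G.Walk u v) (h : ∀ x ∈ p.support, x ∈ W),
      (G.induce W).Walk ⟨u, h u p.start_mem_support⟩ ⟨v, h v p.end_mem_support⟩
  | _, _, SimpleGraph.Walk.nil, _ => SimpleGraph.Walk.nil
  | _, _, SimpleGraph.Walk.cons ha p, h =>
      SimpleGraph.Walk.cons (by exact ha)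
        (liftWalk p (fun x hx => h x (by simp [hx])))

lemma liftWalk_map {G : SimpleGraph V} {W : Set V} :
    ∀ {u v : V} (p : G.Walk u v) (h : ∀ x ∈ p.support, x ∈ W),
      (liftWalk p h).map (SimpleGraph.Embedding.induce W).toHom = p
  | _, _, SimpleGraph.Walk.nil, _ => rfl
  | _, _, SimpleGraph.Walk.cons ha p, h => by
      exact congrArg (SimpleGraph.Walk.cons ha) (liftWalk_map p _)

theorem stmt1 [Fintype V] (G : SimpleGraph V) (hG : G.Connected) (k : ℕ)
    (W : Set V) (hW : GIsConvex G W) (S : Finset V) (hSW : ∀ x ∈ S, x ∈ W)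
    (hS : MutVis G S k) :
    MutVis (G.induce W) (S.subtype (· ∈ W)) k := by
  rintro ⟨u, hu⟩ hu' ⟨v, hv⟩ hv' hne
  have huS : u ∈ S := by simpa using hu'
  have hvS : v ∈ S := by simpa using hv'
  have hne' : u ≠ v := by simpa [Subtype.ext_iff] using hne
  obtain ⟨p, hp, hlen, hcount⟩ := hS u huS v hvS hne'
  have hsup : ∀ x ∈ p.support, x ∈ W := hW u hu v hv p hp hlen
  set f := (SimpleGraph.Embedding.induce (G := G) W)
  have hinj : Function.Injective f.toHom := f.injective
  let q := liftWalk p hsup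
  have hq : q.map f.toHom = p := liftWalk_map p hsup
  have hqpath : q.IsPath := by
    rw [← SimpleGraph.Walk.map_isPath_iff_of_injective hinj, hq]; exact hp
  have hqlen : q.length = p.length := by
    have := congrArg SimpleGraph.Walk.length hq
    rwa [SimpleGraph.Walk.length_map] at this
  have hdist : (G.induce W).dist ⟨u, hu⟩ ⟨v, hv⟩ = G.dist u v := by
    apply le_antisymm
    · calc (G.induce W).dist ⟨u, hu⟩ ⟨v, hv⟩ ≤ q.length := SimpleGraph.dist_le q
        _ = G.dist u v := by rw [hqlen, hlen]
    · obtain ⟨r, hr⟩ := (q.reachable).exists_walk_length_eq_dist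
      calc G.dist u v ≤ (r.map f.toHom).length := SimpleGraph.dist_le _
        _ = (G.induce W).dist ⟨u, hu⟩ ⟨v, hv⟩ := by
            rw [SimpleGraph.Walk.length_map, hr]
  have hsupmap : p.support = q.support.map (⇑f.toHom) := by
    have := congrArg SimpleGraph.Walk.support hq
    rw [SimpleGraph.Walk.support_map] at this
    exact this.symm
  refine ⟨q, hqpath, by rw [hqlen, hlen, hdist], ?_⟩
  have : internalCount q (S.subtype (· ∈ W)) = internalCount p S := by
    unfold internalCount
    rw [hsupmap, ← List.map_tail, ← List.map_dropLast, List.countP_map]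
    apply List.countP_congr
    intro a _
    simp [Finset.mem_subtype, f]
    exact (Bool.decide_iff _).symm
  rw [this]; exact hcount
end

section
/- Let G be a graph, k ≥ 0, and H a convex subgraph of G. Then μ_k(H) ≤ μ_k(G). -/
open scoped Classical

variable {V : Type*}

lemma liftWalk_s2 {G : SimpleGraph V} {W : Set V} {a b : V} (q : G.Walk a b)
    (hs : ∀ x ∈ q.support, x ∈ W) (ha : a ∈ W) (hb : b ∈ W) :
    ∃ r : (G.induce W).Walk ⟨a, ha⟩ ⟨b, hb⟩, r.length = q.length := by
  induction q with
  | nil => exact ⟨.nil, rfl⟩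
  | cons h p ih =>
    rename_i u v w
    have hv : v ∈ W := hs v (by simp)
    obtain ⟨r, hr⟩ := ih (fun x hx => hs x (by simp [hx])) hv hb
    exact ⟨.cons (by exact h) r, by show r.length + 1 = p.length + 1; rw [hr]⟩

theorem stmt2 [Fintype V] (G : SimpleGraph V) (hG : G.Connected) (k : ℕ)
    (W : Set V) (hW : GIsConvex G W) :
    muK (G.induce W) k ≤ muK G k := by
  classical
  apply csSup_le_csSup
  · exact ⟨Fintype.card V, by rintro n ⟨X, _, rfl⟩; exact X.card_le_univ.trans (le_of_eq (Finset.card_univ))⟩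
  · refine ⟨0, ∅, ?_, rfl⟩
    intro u hu
    simp at hu
  · rintro n ⟨X, hX, rfl⟩
    refine ⟨X.image Subtype.val, ?_,
      Finset.card_image_of_injective X Subtype.val_injective⟩
    rintro u hu v hv huv
    simp only [Finset.mem_image] at hu hv
    obtain ⟨u', hu', rfl⟩ := hu
    obtain ⟨v', hv', rfl⟩ := hv
    have huv' : u' ≠ v' := fun h => huv (by rw [h])
    obtain ⟨p, hp, hplen, hpcount⟩ := hX u' hu' v' hv' huv'
    set f := (SimpleGraph.Embedding.induce W (G := G)).toHom with hf
    refine ⟨p.map f, SimpleGraph.Walk.map_isPath_of_injective (SimpleGraph.Embedding.induce W (G := G)).injective hp, ?_, ?_⟩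
    · -- length equals dist in G
      have h1 : G.dist ↑u' ↑v' ≤ (p.map f).length := by
        exact SimpleGraph.dist_le (p.map f)
      have h2 : (p.map f).length ≤ G.dist ↑u' ↑v' := by
        obtain ⟨q, hq, hqlen⟩ := (hG ↑u' ↑v').exists_path_of_dist
        have hsupp : ∀ x ∈ q.support, x ∈ W := hW ↑u' u'.2 ↑v' v'.2 q hq hqlen
        obtain ⟨r, hr⟩ := liftWalk_s2 q hsupp u'.2 v'.2
        have : (G.induce W).dist u' v' ≤ q.length := by
          have := SimpleGraph.dist_le r
          simpa [hr] using this
        rw [SimpleGraph.Walk.length_map, hplen]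
        exact this.trans hqlen.le
      exact le_antisymm h2 h1
    · -- internal count
      have hmap : internalCount (p.map f) (X.image Subtype.val) = internalCount p X := by
        unfold internalCount
        rw [SimpleGraph.Walk.support_map]
        rw [← List.map_tail, ← List.map_dropLast, List.countP_map]
        congr 1
        funext x
        simp [Function.comp, Finset.mem_image, Subtype.val_injective.eq_iff,
          Subtype.ext_iff]
        exact ⟨fun ⟨_, h⟩ => h, fun h => ⟨x.2, h⟩⟩
      refine hmap.le.trans ?_
      exact hpcount
end

section
/- Let G be a graph of order n, k ≥ 0, and V_1,…,V_t ⊆ V(G) with V_1 ∪ … ∪ V_t = V(G). Let H_i be the convex hull of V_i in G. Then μ_k(G) ≤ Σ_{i=1}^t μ_k(H_i). -/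
open scoped Classical

variable {V : Type*}

/-- The convex hull of a set of vertices: the smallest convex set containing it. -/
def convexHullSet (G : SimpleGraph V) (S : Set V) : Set V :=
  ⋂₀ {W | S ⊆ W ∧ GIsConvex G W}

lemma hull_convex (G : SimpleGraph V) (S : Set V) : GIsConvex G (convexHullSet G S) := by
  intro u hu v hv p hp hlen x hx W hW
  exact hW.2 u (hu W hW) v (hv W hW) p hp hlen x hx

lemma subset_hull (G : SimpleGraph V) (S : Set V) : S ⊆ convexHullSet G S := by
  intro x hx W hW
  exact hW.1 hx

/-- The inclusion homomorphism from an induced subgraph. -/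
def inducedHom (G : SimpleGraph V) (W : Set V) : G.induce W →g G :=
  ⟨Subtype.val, fun h => h⟩

lemma lift_walk {G : SimpleGraph V} {W : Set V} :
    ∀ {u v : V} (p : G.Walk u v) (hs : ∀ x ∈ p.support, x ∈ W),
    ∃ q : (G.induce W).Walk ⟨u, hs u p.start_mem_support⟩ ⟨v, hs v p.end_mem_support⟩,
      q.support.map Subtype.val = p.support := by
  intro u v p
  induction p with
  | nil => exact fun hs => ⟨.nil, rfl⟩
  | @cons a b c h p ih =>
      intro hs
      obtain ⟨q, hq⟩ := ih (fun x hx => hs x (List.mem_cons_of_mem _ hx))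
      exact ⟨.cons (by exact h) q, by exact congrArg (List.cons a) hq⟩

theorem stmt3 [Fintype V] (G : SimpleGraph V) (hG : G.Connected) (k : ℕ)
    (t : ℕ) (Vs : Fin t → Set V) (hcov : (⋃ i, Vs i) = Set.univ) :
    muK G k ≤ ∑ i : Fin t, muK (G.induce (convexHullSet G (Vs i))) k := by
  classical
  have hf : ∀ x : V, ∃ i, x ∈ Vs i := fun x =>
    Set.mem_iUnion.mp (hcov ▸ Set.mem_univ x)
  choose f hfmem using hf
  -- the muK set for G is attained
  have hbdd : BddAbove {n | ∃ X : Finset V, MutVis G X k ∧ X.card = n} :=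
    ⟨Fintype.card V, fun n ⟨X, _, hX⟩ => hX ▸ X.card_le_univ⟩
  have hne : {n | ∃ X : Finset V, MutVis G X k ∧ X.card = n}.Nonempty :=
    ⟨0, ∅, fun u hu => by simp at hu, rfl⟩
  obtain ⟨X, hXvis, hXcard⟩ := Nat.sSup_mem hne hbdd
  have hXeq : muK G k = X.card := hXcard.symm
  rw [hXeq]
  have hXsum : X.card = ∑ i : Fin t, (X.filter (fun x => f x = i)).card :=
    Finset.card_eq_sum_card_fiberwise (fun x _ => Finset.mem_univ (f x))
  rw [hXsum]
  apply Finset.sum_le_sum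
  intro i _
  set Hull : Set V := convexHullSet G (Vs i) with hHull
  set Xi : Finset V := X.filter (fun x => f x = i) with hXi
  have hXiHull : ∀ x ∈ Xi, x ∈ Hull := by
    intro x hx
    rw [hXi, Finset.mem_filter] at hx
    exact subset_hull G (Vs i) (hx.2 ▸ hfmem x)
  have hXiX : ∀ x ∈ Xi, x ∈ X := fun x hx => (Finset.mem_filter.mp hx).1
  set Xi' : Finset ↥Hull := Xi.subtype (· ∈ Hull) with hXi'
  have hcard : Xi'.card = Xi.card := by
    rw [hXi', Finset.card_subtype, Finset.filter_true_of_mem hXiHull]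
  -- Xi' is a mutual k-visible set in the induced graph
  have hvis : MutVis (G.induce Hull) Xi' k := by
    intro u' hu' v' hv' huv
    have hu : (u' : V) ∈ Xi := Finset.mem_subtype.mp hu'
    have hv : (v' : V) ∈ Xi := Finset.mem_subtype.mp hv'
    have huvV : (u' : V) ≠ (v' : V) := fun h => huv (Subtype.ext h)
    obtain ⟨p, hp, hlen, hcount⟩ := hXvis _ (hXiX _ hu) _ (hXiX _ hv) huvV
    have hsupp : ∀ x ∈ p.support, x ∈ Hull :=
      hull_convex G (Vs i) _ (u'.2) _ (v'.2) p hp hlen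
    obtain ⟨q, hq⟩ := lift_walk p hsupp
    have hq' : q.support.map Subtype.val = p.support := hq
    -- q is really a walk from u' to v'
    refine ⟨q, ?_, ?_, ?_⟩
    · rw [SimpleGraph.Walk.isPath_def]
      have : (q.support.map Subtype.val).Nodup := hq' ▸ hp.support_nodup
      exact this.of_map _
    · have hlq : q.length = p.length := by
        have h1 : q.support.length = p.support.length := by rw [← hq', List.length_map]
        rw [SimpleGraph.Walk.length_support, SimpleGraph.Walk.length_support] at h1
        omega
      have hd1 : (G.induce Hull).dist u' v' ≤ q.length := SimpleGraph.dist_le q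
      have hd2 : G.dist (u' : V) (v' : V) ≤ (G.induce Hull).dist u' v' := by
        obtain ⟨r, hr⟩ := q.reachable.exists_walk_length_eq_dist
        calc G.dist (u' : V) (v' : V) ≤ (r.map (inducedHom G Hull)).length :=
              SimpleGraph.dist_le _
          _ = r.length := SimpleGraph.Walk.length_map _ _
          _ = _ := hr
      omega
    · rw [internalCount] at hcount ⊢
      have hmap : q.support.tail.dropLast.map Subtype.val = p.support.tail.dropLast := by
        rw [List.map_dropLast, List.map_tail, hq']
      rw [← hmap, List.countP_map] at hcount
      refine le_trans (List.countP_mono_left ?_) hcount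
      intro a _ ha
      simp only [Function.comp_apply, decide_eq_true_eq] at ha ⊢
      exact hXiX _ (Finset.mem_subtype.mp ha)
  -- conclude
  have hmem : Xi'.card ∈ {n | ∃ Y : Finset ↥Hull,
      MutVis (G.induce Hull) Y k ∧ Y.card = n} := ⟨Xi', hvis, rfl⟩
  calc Xi.card = Xi'.card := hcard.symm
    _ ≤ muK (G.induce Hull) k := le_csSup
        ⟨Fintype.card ↥Hull, fun n ⟨Y, _, hY⟩ => hY ▸ Y.card_le_univ⟩ hmem
end

section
/- Let G be a graph of order n and diameter d, and let k ≥ 0. Then μ_k(G) ≤ n − d + k + 1. -/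
open scoped Classical

variable {V : Type*}

/-- Intermediate value theorem for dist along a walk. -/
lemma ivt_dist {G : SimpleGraph V} (hG : G.Connected) (u : V) {ℓ : ℕ} :
    ∀ {x y : V} (p : G.Walk x y), G.dist u x ≤ ℓ → ℓ ≤ G.dist u y →
      ∃ w ∈ p.support, G.dist u w = ℓ := by
  intro x y p
  induction p with
  | nil => intro h1 h2; exact ⟨_, by simp, le_antisymm h1 h2⟩
  | @cons a c y h q ih =>
    intro h1 h2
    rcases eq_or_lt_of_le h1 with heq | hlt
    · exact ⟨a, by simp, heq⟩
    · have hac : G.dist a c ≤ 1 := by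
        simpa using SimpleGraph.dist_le h.toWalk
      have : G.dist u c ≤ ℓ :=
        le_trans (le_trans (hG.dist_triangle (v := a)) (by omega)) (le_refl ℓ)
      obtain ⟨w, hw, hw2⟩ := ih this h2
      exact ⟨w, by simp [hw], hw2⟩

lemma mem_tail_dropLast {G : SimpleGraph V} {x y : V} (p : G.Walk x y) {w : V}
    (hw : w ∈ p.support) (hx : w ≠ x) (hy : w ≠ y) :
    w ∈ p.support.tail.dropLast := by
  have hcons : p.support = x :: p.support.tail := p.support_eq_cons
  have hwt : w ∈ p.support.tail := by
    rw [hcons] at hw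
    rcases List.mem_cons.mp hw with h | h
    · exact absurd h hx
    · exact h
  have hne : p.support.tail ≠ [] := List.ne_nil_of_mem hwt
  have hlast : p.support.tail.getLast hne = y := by
    rw [List.getLast_tail]
    exact p.getLast_support
  have hsplit := List.dropLast_append_getLast hne
  rw [hlast] at hsplit
  rw [← hsplit] at hwt
  rcases List.mem_append.mp hwt with h | h
  · exact h
  · exact absurd (List.mem_singleton.mp h) hy

lemma card_le_countP {l : List V} (hl : l.Nodup) (S X : Finset V)
    (h : ∀ s ∈ S, s ∈ l ∧ s ∈ X) :
    S.card ≤ l.countP (fun x => decide (x ∈ X)) := by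
  have hfil : (l.filter (fun x => decide (x ∈ X))).Nodup := hl.filter _
  have hsub : S ⊆ (l.filter (fun x => decide (x ∈ X))).toFinset := by
    intro s hs
    rw [List.mem_toFinset, List.mem_filter]
    exact ⟨(h s hs).1, by simpa using (h s hs).2⟩
  calc S.card ≤ (l.filter (fun x => decide (x ∈ X))).toFinset.card :=
        Finset.card_le_card hsub
    _ = (l.filter (fun x => decide (x ∈ X))).length := by
        rw [List.toFinset_card_of_nodup hfil]
    _ = l.countP (fun x => decide (x ∈ X)) := List.countP_eq_length_filter.symm

theorem stmt7 [Fintype V] (G : SimpleGraph V) (hG : G.Connected) (k : ℕ) :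
    muK G k ≤ Fintype.card V - G.diam + k + 1 := by
  have hne : Nonempty V := hG.nonempty
  have key : ∀ X : Finset V, MutVis G X k →
      X.card ≤ Fintype.card V - G.diam + k + 1 := by
    intro X hMut
    by_contra hX'
    obtain ⟨u, v, huv⟩ := G.exists_dist_eq_diam
    have hXn : X.card ≤ Fintype.card V := Finset.card_le_univ X
    have hdk : k + 2 ≤ G.diam := by omega
    -- diam + 1 ≤ card V
    obtain ⟨p0, hp0, hp0len⟩ := hG.exists_path_of_dist u v
    have hdn : G.diam + 1 ≤ Fintype.card V := by
      have h1 : p0.support.length ≤ Fintype.card V := by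
        simpa using List.Nodup.length_le_card hp0.support_nodup
      rw [SimpleGraph.Walk.length_support] at h1
      omega
    have hXc : Xᶜ.card ≤ G.diam - (k + 2) := by
      rw [Finset.card_compl]
      omega
    -- levels are nonempty
    have level_ne : ∀ i ≤ G.diam, ∃ w, G.dist u w = i := by
      intro i hi
      obtain ⟨w, _, hw⟩ := ivt_dist (ℓ := i) hG u p0 (by rw [SimpleGraph.dist_self]; omega)
        (by rw [huv]; exact hi)
      exact ⟨w, hw⟩
    -- count non-full levels
    set N : Finset ℕ :=
      (Finset.range (G.diam + 1)).filter (fun i => ¬ ∀ w, G.dist u w = i → w ∈ X) with hN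
    set f : ℕ → V := fun i =>
      if h : ∃ w, G.dist u w = i ∧ w ∉ X then h.choose else Classical.arbitrary V with hf
    have hfspec : ∀ i ∈ N, G.dist u (f i) = i ∧ f i ∉ X := by
      intro i hi
      rw [hN, Finset.mem_filter] at hi
      push_neg at hi
      obtain ⟨w, hw1, hw2⟩ := hi.2
      have hex : ∃ w, G.dist u w = i ∧ w ∉ X := ⟨w, hw1, hw2⟩
      rw [hf]
      simp only [dif_pos hex]
      exact hex.choose_spec
    have hNcard : N.card ≤ Xᶜ.card := by
      apply Finset.card_le_card_of_injOn f
      · intro i hi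
        simpa using (hfspec i hi).2
      · intro i hi j hj hij
        have h1 := (hfspec i hi).1
        have h2 := (hfspec j hj).1
        rw [← h1, ← h2, hij]
    set F : Finset ℕ :=
      (Finset.range (G.diam + 1)).filter (fun i => ∀ w, G.dist u w = i → w ∈ X) with hF
    have hFN : F.card + N.card = G.diam + 1 := by
      rw [hF, hN]
      rw [Finset.card_filter_add_card_filter_not]
      simp
    have hFcard : k + 3 ≤ F.card := by omega
    have hFne : F.Nonempty := Finset.card_pos.mp (by omega)
    set a := F.min' hFne with ha
    set b := F.max' hFne with hb
    have hab : a < b := F.min'_lt_max'_of_card (by omega)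
    have haF : a ∈ F := F.min'_mem hFne
    have hbF : b ∈ F := F.max'_mem hFne
    have hFd : ∀ i ∈ F, i ≤ G.diam := by
      intro i hi
      rw [hF, Finset.mem_filter, Finset.mem_range] at hi
      omega
    have hFfull : ∀ i ∈ F, ∀ w, G.dist u w = i → w ∈ X := by
      intro i hi
      rw [hF, Finset.mem_filter] at hi
      exact hi.2
    obtain ⟨x, hx⟩ := level_ne a (hFd a haF)
    obtain ⟨y, hy⟩ := level_ne b (hFd b hbF)
    have hxX : x ∈ X := hFfull a haF x hx
    have hyX : y ∈ X := hFfull b hbF y hy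
    have hxy : x ≠ y := by
      intro h; rw [h, hy] at hx; omega
    obtain ⟨p, hp, hplen, hpcount⟩ := hMut x hxX y hyX hxy
    set M := (F.erase a).erase b with hM
    have hMcard : k + 1 ≤ M.card := by
      have hbea : b ∈ F.erase a := Finset.mem_erase.mpr ⟨by omega, hbF⟩
      rw [hM, Finset.card_erase_of_mem hbea, Finset.card_erase_of_mem haF]
      omega
    have hMprop : ∀ i ∈ M, a < i ∧ i < b ∧ i ∈ F := by
      intro i hi
      rw [hM, Finset.mem_erase, Finset.mem_erase] at hi
      obtain ⟨hib, hia, hiF⟩ := hi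
      have h1 := F.min'_le i hiF
      have h2 := F.le_max' i hiF
      rw [← ha] at h1; rw [← hb] at h2
      exact ⟨by omega, by omega, hiF⟩
    set g : ℕ → V := fun i =>
      if h : ∃ w ∈ p.support, G.dist u w = i then h.choose else Classical.arbitrary V
      with hg
    have hgspec : ∀ i ∈ M, g i ∈ p.support ∧ G.dist u (g i) = i := by
      intro i hi
      obtain ⟨h1, h2, _⟩ := hMprop i hi
      have hex : ∃ w ∈ p.support, G.dist u w = i := by
        apply ivt_dist hG u p
        · rw [hx]; omega
        · rw [hy]; omega
      rw [hg]
      simp only [dif_pos hex]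
      exact hex.choose_spec
    set S := M.image g with hS
    have hScard : S.card = M.card := by
      rw [hS]
      apply Finset.card_image_of_injOn
      intro i hi j hj hij
      rw [← (hgspec i hi).2, ← (hgspec j hj).2, hij]
    have hnodup : p.support.tail.dropLast.Nodup := by
      have h1 : p.support.Nodup := hp.support_nodup
      have h2 : p.support.tail.Nodup := h1.tail
      exact (List.dropLast_sublist _).nodup h2
    have hmem : ∀ s ∈ S, s ∈ p.support.tail.dropLast ∧ s ∈ X := by
      intro s hs
      rw [hS, Finset.mem_image] at hs
      obtain ⟨i, hi, rfl⟩ := hs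
      obtain ⟨hsup, hdist⟩ := hgspec i hi
      obtain ⟨h1, h2, hiF⟩ := hMprop i hi
      have hgx : g i ≠ x := by intro h; rw [h, hx] at hdist; omega
      have hgy : g i ≠ y := by intro h; rw [h, hy] at hdist; omega
      exact ⟨mem_tail_dropLast p hsup hgx hgy, hFfull i hiF _ hdist⟩
    have hfin : S.card ≤ internalCount p X := card_le_countP hnodup S X hmem
    rw [hScard] at hfin
    omega
  have hne' : {m | ∃ X : Finset V, MutVis G X k ∧ X.card = m}.Nonempty := by
    refine ⟨0, ∅, ?_, Finset.card_empty⟩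
    intro u hu
    simp at hu
  apply csSup_le hne'
  rintro m ⟨X, hX, rfl⟩
  exact key X hX
end

section
/- Let G be a connected graph with diameter d. Then μ_k(G) = |V(G)| if and only if k ≥ d − 1. -/
open scoped Classical

variable {V : Type*}

lemma internalCount_univ_eq [Fintype V] {G : SimpleGraph V} {u v : V} (p : G.Walk u v) :
    internalCount p (Finset.univ) = p.length - 1 := by
  unfold internalCount
  rw [List.countP_eq_length.mpr (by simp)]
  simp [SimpleGraph.Walk.length_support]

theorem stmt8 [Fintype V] (G : SimpleGraph V) (hG : G.Connected) (k : ℕ) :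
    muK G k = Fintype.card V ↔ G.diam - 1 ≤ k := by
  have hne : Nonempty V := hG.nonempty
  have hediam : G.ediam ≠ ⊤ := by
    obtain ⟨a, b, hab⟩ := G.exists_edist_eq_ediam_of_finite
    rw [← hab]
    exact SimpleGraph.edist_ne_top_iff_reachable.mpr (hG a b)
  have hbdd : BddAbove {n | ∃ X : Finset V, MutVis G X k ∧ X.card = n} := by
    refine ⟨Fintype.card V, fun n ⟨X, _, hX⟩ => ?_⟩
    exact hX ▸ X.card_le_univ
  have hmem0 : (0 : ℕ) ∈ {n | ∃ X : Finset V, MutVis G X k ∧ X.card = n} :=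
    ⟨∅, fun u hu => by simp at hu, Finset.card_empty⟩
  constructor
  · intro h
    rcases Nat.lt_or_ge G.diam 2 with hd | hd
    · omega
    · obtain ⟨u, v, huv⟩ := G.exists_dist_eq_diam (α := V)
      have hpos : 0 < G.dist u v := by omega
      have hne' : u ≠ v := by
        rintro rfl; simp [SimpleGraph.dist_self] at hpos
      have hmem : Fintype.card V ∈ {n | ∃ X : Finset V, MutVis G X k ∧ X.card = n} := by
        rw [← h]
        exact Nat.sSup_mem ⟨0, hmem0⟩ hbdd
      obtain ⟨X, hX, hcard⟩ := hmem
      have hXuniv : X = Finset.univ := Finset.eq_univ_of_card X hcard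
      subst hXuniv
      obtain ⟨p, _, hlen, hic⟩ := hX u (Finset.mem_univ u) v (Finset.mem_univ v) hne'
      rw [internalCount_univ_eq, hlen, huv] at hic
      exact hic
  · intro hk
    have huniv : MutVis G Finset.univ k := by
      intro u _ v _ huv
      obtain ⟨p, hp, hlen⟩ := hG.exists_path_of_dist u v
      refine ⟨p, hp, hlen, ?_⟩
      rw [internalCount_univ_eq, hlen]
      have := G.dist_le_diam hediam (u := u) (v := v)
      omega
    apply le_antisymm
    · exact csSup_le ⟨0, hmem0⟩ (fun n ⟨X, _, hX⟩ => hX ▸ X.card_le_univ)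
    · exact le_csSup hbdd ⟨Finset.univ, huniv, Finset.card_univ⟩
end

section
/- Let G be a graph of order n containing a cycle, with girth g, and let k ≥ 0. Then μ_k(G) ≤ n − g + 2k + 3. -/
open scoped Classical

variable {V : Type*}

namespace StmtAux

open SimpleGraph Walk List

lemma split_of_countP {α : Type*} (p : α → Bool) :
    ∀ (l : List α) (c : ℕ), c + 1 ≤ l.countP p →
      ∃ s x t, l = s ++ x :: t ∧ p x = true ∧ s.countP p = c
  | [], c, h => by simp at h
  | a :: l, c, h => by
    by_cases ha : p a = true
    · cases c with
      | zero => exact ⟨[], a, l, rfl, ha, rfl⟩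
      | succ c =>
        have h' : c + 1 ≤ l.countP p := by
          simp [List.countP_cons, ha] at h; omega
        obtain ⟨s, x, t, rfl, hx, hs⟩ := split_of_countP p l c h'
        exact ⟨a :: s, x, t, rfl, hx, by simp [List.countP_cons, ha, hs]⟩
    · have h' : c + 1 ≤ l.countP p := by
        simp only [List.countP_cons, ha] at h; simpa using h
      obtain ⟨s, x, t, rfl, hx, hs⟩ := split_of_countP p l c h'
      exact ⟨a :: s, x, t, rfl, hx, by simp [List.countP_cons, ha, hs]⟩

lemma exists_not_of_countP_lt {α : Type*} {p : α → Bool} :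
    ∀ {l : List α}, l.countP p < l.length → ∃ z ∈ l, ¬ p z
  | [], h => by simp at h
  | a :: l, h => by
    by_cases ha : p a = true
    · have h' : l.countP p < l.length := by
        simp [List.countP_cons, ha] at h
        simpa using h
      obtain ⟨z, hz, hz2⟩ := exists_not_of_countP_lt h'
      exact ⟨z, List.mem_cons_of_mem _ hz, hz2⟩
    · exact ⟨a, List.mem_cons_self, by simpa using ha⟩

lemma split_unique {α : Type*} {x : α} :
    ∀ {s t s' t' : List α}, s ++ x :: t = s' ++ x :: t' → x ∉ s → x ∉ s' →
      s = s' ∧ t = t'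
  | [], t, [], t', h, _, _ => by simpa using h
  | [], t, a :: s', t', h, hx, hx' => by
    simp only [List.nil_append, List.cons_append, List.cons.injEq] at h
    exact absurd (show x ∈ a :: s' by rw [h.1]; exact List.mem_cons_self) hx'
  | a :: s, t, [], t', h, hx, hx' => by
    simp only [List.nil_append, List.cons_append, List.cons.injEq] at h
    exact absurd (by simp [h.1]) hx
  | a :: s, t, b :: s', t', h, hx, hx' => by
    simp only [List.cons_append, List.cons.injEq] at h
    obtain ⟨rfl, h2⟩ := h
    have := split_unique h2 (fun hh => hx (List.mem_cons_of_mem _ hh))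
      (fun hh => hx' (List.mem_cons_of_mem _ hh))
    exact ⟨by rw [this.1], this.2⟩

lemma dlcons {α : Type*} (a : α) {l : List α} (h : l ≠ []) :
    (a :: l).dropLast = a :: l.dropLast := by
  cases l with
  | nil => exact absurd rfl h
  | cons b t => rfl

lemma cons_eq_concat {α : Type*} {a b : α} {l c : List α}
    (h : a :: l = c ++ [b]) (hl : l ≠ []) : l = c.tail ++ [b] := by
  cases c with
  | nil => simp at h; exact absurd h.2 hl
  | cons d t => simp at h; exact h.2

lemma perm_toFinset {α : Type*} [DecidableEq α] {l l' : List α} (h : l.Perm l') :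
    l.toFinset = l'.toFinset := by
  ext x; simp [List.mem_toFinset, h.mem_iff]

variable {G : SimpleGraph V}

lemma countP_mem_eq_card {l : List V} (hl : l.Nodup) (X : Finset V) :
    l.countP (fun x => decide (x ∈ X)) = (l.toFinset ∩ X).card := by
  induction l with
  | nil => simp
  | cons a l ih =>
    rw [List.nodup_cons] at hl
    rw [List.countP_cons, List.toFinset_cons]
    by_cases ha : a ∈ X
    · rw [Finset.insert_inter_of_mem ha,
        Finset.card_insert_of_notMem (fun hmem => hl.1 (by
          have := (Finset.mem_inter.mp hmem).1
          simpa using this))]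
      simp [ha, ih hl.2]
    · rw [Finset.insert_inter_of_notMem ha]
      simp [ha, ih hl.2]

lemma support_dropLast_eq {a b : V} (p : G.Walk a b) :
    p.support = p.support.dropLast ++ [b] := by
  conv_lhs => rw [← List.dropLast_append_getLast (p.support_ne_nil), p.getLast_support]

lemma support_split {a b x : V} (w : G.Walk a b) (hx : x ∈ w.support) :
    ∃ s t, w.support = s ++ x :: t ∧ (w.takeUntil x hx).support = s ++ [x] ∧
      (w.dropUntil x hx).support = x :: t ∧ x ∉ s := by
  refine ⟨(w.takeUntil x hx).support.dropLast, (w.dropUntil x hx).support.tail, ?_, ?_, ?_, ?_⟩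
  · have h1 : w.support = (w.takeUntil x hx).support ++ (w.dropUntil x hx).support.tail := by
      conv_lhs => rw [← w.take_spec hx]
      rw [Walk.support_append]
    rw [h1]
    conv_lhs => rw [support_dropLast_eq (w.takeUntil x hx)]
    simp only [List.append_assoc, List.singleton_append]
  · exact support_dropLast_eq (w.takeUntil x hx)
  · exact (w.dropUntil x hx).support_eq_cons
  · have hc := w.count_support_takeUntil_eq_one hx
    conv at hc => rw [support_dropLast_eq (w.takeUntil x hx)]
    rw [List.count_append] at hc
    simp at hc
    exact List.count_eq_zero.mp hc

lemma length_rotate' {u v : V} (c : G.Walk v v) (h : u ∈ c.support) :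
    (c.rotate u h).length = c.length := by
  have h1 := congrArg Walk.length (c.take_spec h)
  rw [Walk.length_append] at h1
  rw [Walk.rotate, Walk.length_append]
  omega

lemma isPath_loop_eq {v : V} {p : G.Walk v v} (hp : p.IsPath) : p = Walk.nil := by
  have := SimpleGraph.Path.loop_eq ⟨p, hp⟩
  exact congrArg Subtype.val this

lemma girth_le_of_cycle {a : V} {w : G.Walk a a} (hw : w.IsCycle) :
    G.girth ≤ w.length := by
  have h1 : G.egirth ≤ (w.length : ℕ∞) := by
    rw [SimpleGraph.egirth]
    exact iInf_le_of_le a (iInf_le_of_le w (iInf_le_of_le hw le_rfl))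
  have := ENat.toNat_le_toNat h1 (by simp)
  simpa [SimpleGraph.girth] using this

lemma girth_aux {u v a : V} (h : G.Adj u a) (p' : G.Walk a v) (q : G.Walk u v)
    (hp : (Walk.cons h p').IsPath) (hq : q.IsPath) (hav : a ≠ v)
    (hdisj : ∀ x, x ∈ (Walk.cons h p').support → x ∈ q.support → x = u ∨ x = v) :
    G.girth ≤ (Walk.cons h p').length + q.length := by
  have hp' : p'.IsPath := hp.of_cons
  have hu_not : u ∉ p'.support := by
    have h2 := hp.support_nodup
    rw [Walk.support_cons, List.nodup_cons] at h2
    exact h2.1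
  have hqs : q.support = q.support.dropLast ++ [v] := support_dropLast_eq q
  have hv_not : v ∉ q.support.dropLast := by
    have hnd := hq.support_nodup
    rw [hqs, List.nodup_append] at hnd
    exact fun hv => hnd.2.2 v hv v (by simp) rfl
  have hrsupp : (p'.append q.reverse).support
      = p'.support ++ (q.support.dropLast).reverse := by
    rw [Walk.support_append, Walk.support_reverse]
    congr 1
    conv_lhs => rw [hqs]
    simp
  have hdisj2 : p'.support.Disjoint (q.support.dropLast).reverse := by
    intro x hx1 hx2
    rw [List.mem_reverse] at hx2
    have hxq : x ∈ q.support := List.dropLast_subset _ hx2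
    rcases hdisj x (by rw [Walk.support_cons]; exact List.mem_cons_of_mem _ hx1) hxq
      with rfl | rfl
    · exact hu_not hx1
    · exact hv_not hx2
  have hnd : (p'.append q.reverse).support.Nodup := by
    rw [hrsupp, List.nodup_append]
    exact ⟨hp'.support_nodup,
      List.nodup_reverse.mpr (hq.support_nodup.sublist (List.dropLast_sublist _)),
      fun a ha b hb hab => hdisj2 ha (by subst hab; exact hb)⟩
  have hrpath : (p'.append q.reverse).IsPath := Walk.IsPath.mk' hnd
  have hedge : s(u, a) ∉ (p'.append q.reverse).edges := by
    rw [Walk.edges_append]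
    intro hmem
    rcases List.mem_append.mp hmem with hm | hm
    · exact hu_not (p'.fst_mem_support_of_mem_edges hm)
    · rw [Walk.edges_reverse, List.mem_reverse] at hm
      have haq : a ∈ q.support := q.snd_mem_support_of_mem_edges hm
      rcases hdisj a (by simp) haq with rfl | rfl
      · exact G.irrefl h
      · exact hav rfl
  have hcyc : (Walk.cons h (p'.append q.reverse)).IsCycle :=
    SimpleGraph.Path.cons_isCycle ⟨_, hrpath⟩ h hedge
  have hg := girth_le_of_cycle hcyc
  have hlen : (Walk.cons h (p'.append q.reverse)).length
      = (Walk.cons h p').length + q.length := by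
    simp [Walk.length_cons, Walk.length_append, Walk.length_reverse]
    omega
  rw [hlen] at hg
  exact hg

lemma girth_le_two_paths_aux (N : ℕ) : ∀ {u v : V} (p q : G.Walk u v),
    p.length + q.length ≤ N → p.IsPath → q.IsPath → p ≠ q →
    G.girth ≤ p.length + q.length := by
  induction N using Nat.strong_induction_on with
  | _ N ih =>
  intro u v p q hN hp hq hne
  by_cases hshare : ∃ x, x ∈ p.support ∧ x ∈ q.support ∧ x ≠ u ∧ x ≠ v
  · obtain ⟨x, hxp, hxq, hxu, hxv⟩ := hshare
    have hps := p.take_spec hxp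
    have hqs := q.take_spec hxq
    have hplen : (p.takeUntil x hxp).length + (p.dropUntil x hxp).length = p.length := by
      conv_rhs => rw [← hps]
      rw [Walk.length_append]
    have hqlen : (q.takeUntil x hxq).length + (q.dropUntil x hxq).length = q.length := by
      conv_rhs => rw [← hqs]
      rw [Walk.length_append]
    have hp1 : 1 ≤ (p.takeUntil x hxp).length := by
      rcases Nat.eq_zero_or_pos (p.takeUntil x hxp).length with h0 | h1
      · exact absurd (Walk.eq_of_length_eq_zero h0).symm hxu
      · exact h1
    have hp2 : 1 ≤ (p.dropUntil x hxp).length := by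
      rcases Nat.eq_zero_or_pos (p.dropUntil x hxp).length with h0 | h1
      · exact absurd (Walk.eq_of_length_eq_zero h0) hxv
      · exact h1
    have hq1 : 1 ≤ (q.takeUntil x hxq).length := by
      rcases Nat.eq_zero_or_pos (q.takeUntil x hxq).length with h0 | h1
      · exact absurd (Walk.eq_of_length_eq_zero h0).symm hxu
      · exact h1
    have hq2 : 1 ≤ (q.dropUntil x hxq).length := by
      rcases Nat.eq_zero_or_pos (q.dropUntil x hxq).length with h0 | h1
      · exact absurd (Walk.eq_of_length_eq_zero h0) hxv
      · exact h1
    have hcases : p.takeUntil x hxp ≠ q.takeUntil x hxq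
        ∨ p.dropUntil x hxp ≠ q.dropUntil x hxq := by
      by_contra hcon
      push_neg at hcon
      apply hne
      rw [← hps, ← hqs, hcon.1, hcon.2]
    rcases hcases with hd | hd
    · have hrec := ih ((p.takeUntil x hxp).length + (q.takeUntil x hxq).length)
        (by omega) _ _ le_rfl (hp.takeUntil hxp) (hq.takeUntil hxq) hd
      omega
    · have hrec := ih ((p.dropUntil x hxp).length + (q.dropUntil x hxq).length)
        (by omega) _ _ le_rfl (hp.dropUntil hxp) (hq.dropUntil hxq) hd
      omega
  · push_neg at hshare
    have hdisj : ∀ x, x ∈ p.support → x ∈ q.support → x = u ∨ x = v := fun x hx1 hx2 =>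
      if hxu : x = u then Or.inl hxu else Or.inr (hshare x hx1 hx2 hxu)
    have huv : u ≠ v := by
      rintro rfl
      exact hne ((isPath_loop_eq hp).trans (isPath_loop_eq hq).symm)
    obtain ⟨a, ha, p', rfl⟩ := Walk.not_nil_iff.mp (Walk.not_nil_of_ne (p := p) huv)
    obtain ⟨b, hb, q', rfl⟩ := Walk.not_nil_iff.mp (Walk.not_nil_of_ne (p := q) huv)
    by_cases hav : a = v
    · by_cases hbv : b = v
      · subst hav; subst hbv
        have hp'nil : p' = Walk.nil := isPath_loop_eq hp.of_cons
        have hq'nil : q' = Walk.nil := isPath_loop_eq hq.of_cons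
        subst hp'nil; subst hq'nil
        exact absurd rfl hne
      · have hg := girth_aux hb q' (Walk.cons ha p') hq hp hbv
          (fun x hx1 hx2 => hdisj x hx2 hx1)
        omega
    · exact girth_aux ha p' _ hp hq hav hdisj

lemma girth_le_two_paths {u v : V} {p q : G.Walk u v} (hp : p.IsPath) (hq : q.IsPath)
    (hne : p ≠ q) : G.girth ≤ p.length + q.length :=
  girth_le_two_paths_aux _ p q le_rfl hp hq hne

lemma girth_add_two_le {u v x : V} {p q : G.Walk u v} (hp : p.IsPath) (hq : q.IsPath)
    (hne : p ≠ q) (hxp : x ∈ p.support) (hxq : x ∈ q.support) (hxu : x ≠ u) (hxv : x ≠ v) :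
    G.girth + 2 ≤ p.length + q.length := by
  have hps := p.take_spec hxp
  have hqs := q.take_spec hxq
  have hplen : (p.takeUntil x hxp).length + (p.dropUntil x hxp).length = p.length := by
    conv_rhs => rw [← hps]
    rw [Walk.length_append]
  have hqlen : (q.takeUntil x hxq).length + (q.dropUntil x hxq).length = q.length := by
    conv_rhs => rw [← hqs]
    rw [Walk.length_append]
  have hp1 : 1 ≤ (p.takeUntil x hxp).length := by
    rcases Nat.eq_zero_or_pos (p.takeUntil x hxp).length with h0 | h1
    · exact absurd (Walk.eq_of_length_eq_zero h0).symm hxu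
    · exact h1
  have hp2 : 1 ≤ (p.dropUntil x hxp).length := by
    rcases Nat.eq_zero_or_pos (p.dropUntil x hxp).length with h0 | h1
    · exact absurd (Walk.eq_of_length_eq_zero h0) hxv
    · exact h1
  have hq1 : 1 ≤ (q.takeUntil x hxq).length := by
    rcases Nat.eq_zero_or_pos (q.takeUntil x hxq).length with h0 | h1
    · exact absurd (Walk.eq_of_length_eq_zero h0).symm hxu
    · exact h1
  have hq2 : 1 ≤ (q.dropUntil x hxq).length := by
    rcases Nat.eq_zero_or_pos (q.dropUntil x hxq).length with h0 | h1
    · exact absurd (Walk.eq_of_length_eq_zero h0) hxv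
    · exact h1
  have hcases : p.takeUntil x hxp ≠ q.takeUntil x hxq
      ∨ p.dropUntil x hxp ≠ q.dropUntil x hxq := by
    by_contra hcon
    push_neg at hcon
    apply hne
    rw [← hps, ← hqs, hcon.1, hcon.2]
  rcases hcases with hd | hd
  · have hrec := girth_le_two_paths (hp.takeUntil hxp) (hq.takeUntil hxq) hd
    omega
  · have hrec := girth_le_two_paths (hp.dropUntil hxp) (hq.dropUntil hxq) hd
    omega

lemma girth_le_double {X : Finset V} {k : ℕ} (hvis : MutVis G X k) {u v : V}
    (hu : u ∈ X) (hv : v ∈ X) (huv : u ≠ v) {A : G.Walk u v} (hA : A.IsPath)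
    (hcnt : k + 1 ≤ internalCount A X) : G.girth ≤ 2 * A.length := by
  obtain ⟨P, hP, hPlen, hPcnt⟩ := hvis u hu v hv huv
  have hPA : P ≠ A := fun h => by rw [h] at hPcnt; omega
  have h1 := girth_le_two_paths hP hA hPA
  have h2 : P.length ≤ A.length := by rw [hPlen]; exact SimpleGraph.dist_le A
  omega

lemma card_le_bound [Fintype V] {G : SimpleGraph V} (hcyc : ¬ G.IsAcyclic) {k : ℕ}
    (X : Finset V) (hvis : MutVis G X k) :
    X.card ≤ Fintype.card V - G.girth + 2 * k + 3 := by
  classical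
  obtain ⟨a, w, hw, hgl⟩ := SimpleGraph.exists_girth_eq_length.mpr hcyc
  set n := Fintype.card V with hn
  have htail_nd : w.support.tail.Nodup := hw.support_nodup
  have htail_len : w.support.tail.length = w.length := by
    have h1 := w.length_support
    have h2 := List.length_tail (l := w.support)
    omega
  set S : Finset V := w.support.tail.toFinset with hS
  have hcardS : S.card = G.girth := by
    rw [hS, List.toFinset_card_of_nodup htail_nd, htail_len, hgl]
  have hgn : G.girth ≤ n := by
    rw [← hcardS]; exact Finset.card_le_univ S
  have hsplitX : (X ∩ S).card + (X \ S).card = X.card :=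
    Finset.card_inter_add_card_sdiff X S
  have hXS : (X \ S).card ≤ n - G.girth := by
    have h1 : X \ S ⊆ Sᶜ := fun x hx =>
      Finset.mem_compl.mpr (Finset.mem_sdiff.mp hx).2
    have := Finset.card_le_card h1
    rwa [Finset.card_compl, hcardS] at this
  by_cases hm : (X ∩ S).card ≤ 2 * k + 3
  · omega
  push_neg at hm
  obtain ⟨u, huXS⟩ := Finset.card_pos.mp (show 0 < (X ∩ S).card by omega)
  have huX : u ∈ X := (Finset.mem_inter.mp huXS).1
  have huS : u ∈ S := (Finset.mem_inter.mp huXS).2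
  have huSup : u ∈ w.support := by
    have h1 : u ∈ w.support.tail := List.mem_toFinset.mp (by rwa [hS] at huS)
    rw [w.support_eq_cons]
    exact List.mem_cons_of_mem _ h1
  set w' := w.rotate u huSup with hw'def
  have hw'cyc : w'.IsCycle := hw.rotate huSup
  set τ := w'.support.tail with hτdef
  have hτnd : τ.Nodup := hw'cyc.support_nodup
  have hτperm : τ.Perm w.support.tail := (Walk.support_rotate w u huSup).perm
  have hτfin : τ.toFinset = S := by rw [hS]; exact perm_toFinset hτperm
  have hτlen : τ.length = G.girth := by rw [hτperm.length_eq, htail_len, hgl]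
  have hτcnt : τ.countP (fun x => decide (x ∈ X)) = (X ∩ S).card := by
    rw [countP_mem_eq_card hτnd X, hτfin, Finset.inter_comm]
  have hsup' : w'.support = u :: τ := w'.support_eq_cons
  obtain ⟨l1, v, l2, hτeq, hvX', hl1cnt⟩ :=
    split_of_countP (fun x => decide (x ∈ X)) τ (k + 1) (by rw [hτcnt]; omega)
  have hvX : v ∈ X := by simpa using hvX'
  have hcnt2 : l2.countP (fun x => decide (x ∈ X)) = (X ∩ S).card - (k + 2) := by
    have h1 := hτcnt
    rw [hτeq, List.countP_append, List.countP_cons, hl1cnt] at h1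
    simp [hvX'] at h1
    omega
  have hl2ne : l2 ≠ [] := by
    intro h
    rw [h] at hcnt2
    simp at hcnt2
    omega
  have hnd1 : l1.Nodup ∧ (v :: l2).Nodup ∧ l1.Disjoint (v :: l2) := by
    have h1 := hτnd
    rw [hτeq, List.nodup_append] at h1
    exact ⟨h1.1, h1.2.1, fun a ha hb => h1.2.2 a ha a hb rfl⟩
  have hvl2 : v ∉ l2 := (List.nodup_cons.mp hnd1.2.1).1
  have hl2nd : l2.Nodup := (List.nodup_cons.mp hnd1.2.1).2
  have hv_l1 : v ∉ l1 := fun h => hnd1.2.2 h (List.mem_cons_self)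
  -- τ ends with u
  have hτne : τ ≠ [] := by
    intro h
    rw [h] at hτlen
    have := SimpleGraph.three_le_girth hcyc
    simp at hτlen
    omega
  have hτdec : τ = w'.support.dropLast.tail ++ [u] :=
    cons_eq_concat (by rw [← hsup']; exact support_dropLast_eq w') hτne
  have hτlast : τ.getLast? = some u := by rw [hτdec]; exact List.getLast?_concat
  have hl2dec : l2 = l2.dropLast ++ [u] := by
    have h1 : τ = (l1 ++ v :: l2.dropLast) ++ [l2.getLast hl2ne] := by
      rw [hτeq]
      conv_lhs => rw [← List.dropLast_append_getLast hl2ne]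
      simp
    rw [h1, List.getLast?_concat] at hτlast
    have h3 := Option.some.inj hτlast
    conv_lhs => rw [← List.dropLast_append_getLast hl2ne]
    rw [h3]
  have hul2 : u ∈ l2 := by rw [hl2dec]; simp
  have hvu : v ≠ u := fun h => hvl2 (h ▸ hul2)
  have hu_l1 : u ∉ l1 := fun h => hnd1.2.2 h (List.mem_cons_of_mem _ hul2)
  have hu_l2' : u ∉ l2.dropLast := by
    have h1 := hl2nd
    rw [hl2dec, List.nodup_append] at h1
    exact fun h => h1.2.2 u h u (by simp) rfl
  -- split the cycle at v
  have hvsup : v ∈ w'.support := by rw [hsup', hτeq]; simp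
  obtain ⟨s, t, hsupdec, htake, hdrop, hvs⟩ := support_split w' hvsup
  set A1 := w'.takeUntil v hvsup with hA1def
  set A2 := w'.dropUntil v hvsup with hA2def
  obtain ⟨hs_eq, ht_eq⟩ := split_unique (x := v) (s := u :: l1) (t := l2) (s' := s) (t' := t)
    (by rw [← hsupdec, hsup', hτeq]; simp)
    (by intro h; rcases List.mem_cons.mp h with h | h; exact hvu h; exact hv_l1 h)
    hvs
  have hA1sup : A1.support = u :: (l1 ++ [v]) := by rw [htake, ← hs_eq]; simp
  have hA2sup : A2.support = v :: l2 := by rw [hdrop, ← ht_eq]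
  have hA1path : A1.IsPath := Walk.IsPath.mk' (by
    rw [hA1sup, List.nodup_cons]
    constructor
    · intro hmem
      rcases List.mem_append.mp hmem with h | h
      · exact hu_l1 h
      · have huv2 : u = v := by simpa using h
        exact hvu huv2.symm
    · rw [List.nodup_append]
      exact ⟨hnd1.1, List.nodup_singleton v,
        fun x hx y hy hxy => hv_l1 (by rw [List.mem_singleton.mp hy] at hxy; rwa [hxy] at hx)⟩)
  have hA2path : A2.IsPath := Walk.IsPath.mk' (by rw [hA2sup]; exact hnd1.2.1)
  have hA1len : A1.length = l1.length + 1 := by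
    have h1 := A1.length_support
    rw [hA1sup] at h1
    simp at h1
    omega
  have hA2len : A2.length = l2.length := by
    have h1 := A2.length_support
    rw [hA2sup] at h1
    simp at h1
    omega
  have hsum : A1.length + A2.length = G.girth := by
    have h1 := congrArg Walk.length (w'.take_spec hvsup)
    rw [Walk.length_append] at h1
    have h2 : w'.length = w.length := length_rotate' w huSup
    rw [hgl, ← h2]
    exact h1
  have hic1 : internalCount A1 X = k + 1 := by
    simp only [internalCount, hA1sup, List.tail_cons, List.dropLast_concat]
    exact hl1cnt
  have hgb1 : G.girth ≤ 2 * A1.length :=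
    girth_le_double hvis huX hvX (fun h => hvu h.symm) hA1path (by rw [hic1])
  have hA2rsup : A2.reverse.support = u :: (l2.dropLast.reverse ++ [v]) := by
    rw [Walk.support_reverse, hA2sup]
    conv_lhs => rw [hl2dec]
    simp
  have hdlcnt : l2.dropLast.countP (fun x => decide (x ∈ X))
      = (X ∩ S).card - (k + 3) := by
    have h1 := hcnt2
    rw [hl2dec, List.countP_append] at h1
    simp [List.countP_cons, huX] at h1
    omega
  have hic2 : internalCount A2.reverse X = (X ∩ S).card - (k + 3) := by
    simp only [internalCount, hA2rsup, List.tail_cons, List.dropLast_concat,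
      List.countP_reverse]
    exact hdlcnt
  have hgb2 : G.girth ≤ 2 * A2.reverse.length := by
    apply girth_le_double hvis huX hvX (fun h => hvu h.symm) hA2path.reverse
    rw [hic2]; omega
  have hA2rlen : A2.reverse.length = l2.length := by rw [Walk.length_reverse, hA2len]
  rcases Nat.lt_or_ge (2 * k + 4) (X ∩ S).card with hm5 | hm4
  · -- at least 2k+5 vertices of X on the cycle: contradiction
    exfalso
    obtain ⟨s2, v2, t2, hl2'eq, hv2X', hs2cnt⟩ :=
      split_of_countP (fun x => decide (x ∈ X)) l2.dropLast 0 (by rw [hdlcnt]; omega)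
    have hv2X : v2 ∈ X := by simpa using hv2X'
    have hτeq2 : τ = (l1 ++ v :: s2) ++ v2 :: (t2 ++ [u]) := by
      rw [hτeq]
      conv_lhs => rw [hl2dec, hl2'eq]
      simp
    have ht2cnt : t2.countP (fun x => decide (x ∈ X)) = (X ∩ S).card - (k + 4) := by
      have h1 := hdlcnt
      rw [hl2'eq, List.countP_append, List.countP_cons, hs2cnt] at h1
      simp [hv2X'] at h1
      omega
    have hnd2 : (l1 ++ v :: s2).Nodup ∧ (v2 :: (t2 ++ [u])).Nodup
        ∧ (l1 ++ v :: s2).Disjoint (v2 :: (t2 ++ [u])) := by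
      have h1 := hτnd
      rw [hτeq2, List.nodup_append] at h1
      exact ⟨h1.1, h1.2.1, fun a ha hb => h1.2.2 a ha a hb rfl⟩
    have hv2pre : v2 ∉ l1 ++ v :: s2 := fun h => hnd2.2.2 h (List.mem_cons_self)
    have hv2u : v2 ≠ u := by
      have h1 := (List.nodup_cons.mp hnd2.2.1).1
      exact fun h => h1 (by rw [h]; simp)
    have hv2sup : v2 ∈ w'.support := by rw [hsup', hτeq2]; simp
    obtain ⟨s', t', hsupdec2, htake2, hdrop2, hvs2⟩ := support_split w' hv2sup
    obtain ⟨hs_eq2, ht_eq2⟩ := split_unique (x := v2) (s := u :: (l1 ++ v :: s2))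
      (t := t2 ++ [u]) (s' := s') (t' := t')
      (by rw [← hsupdec2, hsup', hτeq2]; simp)
      (by intro h; rcases List.mem_cons.mp h with h | h; exact hv2u h; exact hv2pre h)
      hvs2
    set A2' := w'.dropUntil v2 hv2sup with hA2'def
    have hA2'sup : A2'.support = v2 :: (t2 ++ [u]) := by rw [hdrop2, ← ht_eq2]
    have hA2'path : A2'.IsPath := Walk.IsPath.mk' (by rw [hA2'sup]; exact hnd2.2.1)
    have hA2'len : A2'.length = t2.length + 1 := by
      have h1 := A2'.length_support
      rw [hA2'sup] at h1
      simp at h1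
      omega
    have hA2'rsup : A2'.reverse.support = u :: (t2.reverse ++ [v2]) := by
      rw [Walk.support_reverse, hA2'sup]
      simp
    have hic3 : internalCount A2'.reverse X = (X ∩ S).card - (k + 4) := by
      simp only [internalCount, hA2'rsup, List.tail_cons, List.dropLast_concat,
        List.countP_reverse]
      exact ht2cnt
    have hgb3 : G.girth ≤ 2 * A2'.reverse.length := by
      apply girth_le_double hvis huX hv2X (fun h => hv2u h.symm) hA2'path.reverse
      rw [hic3]; omega
    have hA2'rlen : A2'.reverse.length = t2.length + 1 := by
      rw [Walk.length_reverse, hA2'len]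
    have hτlen2 : τ.length = l1.length + s2.length + t2.length + 3 := by
      rw [hτeq2]
      simp
      omega
    have e1 : G.girth ≤ 2 * (l1.length + 1) := by rw [← hA1len]; exact hgb1
    have e2 : G.girth ≤ 2 * (t2.length + 1) := by rw [← hA2'rlen]; exact hgb3
    have e3 : G.girth = l1.length + s2.length + t2.length + 3 := by
      rw [← hτlen, hτlen2]
    omega
  · -- exactly 2k+4 vertices of X on the cycle
    have hm' : (X ∩ S).card = 2 * k + 4 := by omega
    obtain ⟨P, hP, hPlen, hPcnt⟩ := hvis u huX v hvX (fun h => hvu h.symm)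
    have hPle : P.length ≤ A1.length := by rw [hPlen]; exact SimpleGraph.dist_le A1
    have hPA1 : P ≠ A1 := fun h => by
      rw [h, hic1] at hPcnt
      omega
    have hic2' : internalCount A2.reverse X = k + 1 := by rw [hic2]; omega
    have hPA2 : P ≠ A2.reverse := fun h => by
      rw [h, hic2'] at hPcnt
      omega
    have hPlenEq : P.length = A1.length := by
      have h2 := girth_le_two_paths hP hA1path hPA1
      omega
    have hτcnt_le : τ.countP (fun x => decide (x ∈ X)) ≤ τ.length :=
      List.countP_le_length
    have hiplen : P.support.tail.dropLast.length = P.length - 1 := by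
      have h1 := P.length_support
      have h2 := List.length_tail (l := P.support)
      have h3 := List.length_dropLast (xs := P.support.tail)
      omega
    have hipcnt : P.support.tail.dropLast.countP (fun x => decide (x ∈ X)) ≤ k := hPcnt
    have hzex : ∃ z ∈ P.support.tail.dropLast, z ∉ X := by
      obtain ⟨z, hz1, hz2⟩ := exists_not_of_countP_lt
        (show P.support.tail.dropLast.countP (fun x => decide (x ∈ X))
          < P.support.tail.dropLast.length by omega)
      exact ⟨z, hz1, by simpa using hz2⟩
    obtain ⟨z, hzip, hzX⟩ := hzex
    have hztail : z ∈ P.support.tail := List.dropLast_subset _ hzip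
    have hzsupP : z ∈ P.support := by
      rw [P.support_eq_cons]
      exact List.mem_cons_of_mem _ hztail
    have hzu : z ≠ u := by
      have h1 := hP.support_nodup
      rw [P.support_eq_cons, List.nodup_cons] at h1
      exact fun h => h1.1 (h ▸ hztail)
    have htne : P.support.tail ≠ [] := by
      intro h
      have h2 := List.length_tail (l := P.support)
      have h3 := P.length_support
      rw [h] at h2
      simp at h2
      omega
    have hzdl : z ∈ P.support.dropLast := by
      have h1 : P.support.dropLast = u :: P.support.tail.dropLast := by
        conv_lhs => rw [P.support_eq_cons]
        exact dlcons u htne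
      rw [h1]
      exact List.mem_cons_of_mem _ hzip
    have hzv : z ≠ v := by
      intro h
      have h1 : v ∉ P.support.dropLast := by
        have h2 := hP.support_nodup
        rw [support_dropLast_eq P, List.nodup_append] at h2
        exact fun hmm => h2.2.2 v hmm v (by simp) rfl
      exact h1 (h ▸ hzdl)
    have hzS : z ∉ S := by
      intro hzS
      have hzτ : z ∈ τ := List.mem_toFinset.mp (by rwa [hτfin])
      rw [hτeq] at hzτ
      rcases List.mem_append.mp hzτ with hz1 | hz2
      · have hzA1 : z ∈ A1.support := by rw [hA1sup]; simp [hz1]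
        have hgg := girth_add_two_le hP hA1path hPA1 hzsupP hzA1 hzu hzv
        omega
      · rcases List.mem_cons.mp hz2 with h | hz3
        · exact hzv h
        · have hzl2' : z ∈ l2.dropLast := by
            rw [hl2dec] at hz3
            rcases List.mem_append.mp hz3 with h | h
            · exact h
            · exact absurd (by simpa using h) hzu
          have hzA2 : z ∈ A2.reverse.support := by rw [hA2rsup]; simp [hzl2']
          have hgg := girth_add_two_le hP hA2path.reverse hPA2 hzsupP hzA2 hzu hzv
          omega
    have hzc : z ∈ Sᶜ := Finset.mem_compl.mpr hzS
    have hsub2 : X \ S ⊆ Sᶜ.erase z := by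
      intro x hx
      rw [Finset.mem_erase]
      exact ⟨fun h => hzX (h ▸ (Finset.mem_sdiff.mp hx).1),
        Finset.mem_compl.mpr (Finset.mem_sdiff.mp hx).2⟩
    have hcard2 : (X \ S).card ≤ n - G.girth - 1 := by
      have h1 := Finset.card_le_card hsub2
      rwa [Finset.card_erase_of_mem hzc, Finset.card_compl, hcardS] at h1
    have hng1 : 1 ≤ n - G.girth := by
      have h1 := Finset.card_pos.mpr ⟨z, hzc⟩
      rwa [Finset.card_compl, hcardS] at h1
    omega

end StmtAux

theorem stmt9 [Fintype V] (G : SimpleGraph V) (hG : G.Connected) (hcyc : ¬ G.IsAcyclic)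
    (k : ℕ) :
    muK G k ≤ Fintype.card V - G.girth + 2 * k + 3 := by
  classical
  unfold muK
  apply csSup_le
  · exact ⟨0, ∅, fun u hu => absurd hu (Finset.notMem_empty u), by simp⟩
  · rintro b ⟨X, hX, rfl⟩
    exact StmtAux.card_le_bound hcyc X hX
end

section
/- Let G be a graph of order n and k ≥ 0. If G contains an isometric path with ℓ + 1 vertices (i.e., of length ℓ), then μ_k(G) ≤ n − ℓ + k + 1. -/
open scoped Classical

variable {V : Type*}

lemma gE (l : List V) {i j : ℕ} (h : i = j) {hi : i < l.length} :
    l[i]'hi = l[j]'(h ▸ hi) := by subst h; rfl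

lemma cnt (lst : List V) (X : Finset V) (h : lst.Nodup) :
    lst.countP (fun x => decide (x ∈ X)) = (lst.toFinset.filter (fun w => w ∈ X)).card := by
  classical
  rw [List.countP_eq_length_filter, ← List.toFinset_card_of_nodup (h.filter _),
    List.toFinset_filter]
  congr 1
  simp

lemma aux {G : SimpleGraph V} {x y u : V} (X : Finset V)
    (q : G.Walk x y) (hq : q.IsPath) (hu : u ∈ q.support)
    (n : ℕ) (hn : n < q.support.length) (hgn : q.support[n] = u)
    (hmin : ∀ (j : ℕ) (hj : j < q.support.length), q.support[j] ∈ X → n ≤ j) :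
    (q.takeUntil u hu).length = n ∧
    (q.takeUntil u hu).support.countP (fun w => decide (w ∈ X)) ≤ 1 := by
  classical
  have hle := SimpleGraph.Walk.length_takeUntil_le q hu
  set p1 := q.takeUntil u hu with hp1
  have hpre : p1.support <+: q.support :=
    ⟨(q.dropUntil u hu).support.tail, by
      rw [← SimpleGraph.Walk.support_append, SimpleGraph.Walk.take_spec]⟩
  have hl1 : p1.support.length = p1.length + 1 := SimpleGraph.Walk.length_support _
  have hq1 : q.support.length = q.length + 1 := SimpleGraph.Walk.length_support _
  have hlt : p1.length < q.support.length := by omega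
  have hlast : p1.support[p1.length]'(by omega) = u := by
    have h1 := p1.getLast_support
    rw [List.getLast_eq_getElem] at h1
    convert h1 using 2
    omega
  have h2 : q.support[p1.length]'hlt = u := by
    rw [← hpre.getElem (by omega)]; exact hlast
  have hnd := hq.support_nodup
  have hlen_eq : p1.length = n := by
    have hinj := List.nodup_iff_injective_get.mp hnd
    have h5 : (⟨p1.length, hlt⟩ : Fin q.support.length) = ⟨n, hn⟩ := by
      apply hinj
      simp only [List.get_eq_getElem]
      rw [h2, hgn]
    exact congrArg Fin.val h5
  refine ⟨hlen_eq, ?_⟩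
  have hps : p1.support = q.support.take (n + 1) := by
    have h3 := List.prefix_iff_eq_take.mp hpre
    rwa [hl1, hlen_eq] at h3
  rw [hps, List.take_succ, List.countP_append]
  have hz : (q.support.take n).countP (fun w => decide (w ∈ X)) = 0 := by
    rw [List.countP_eq_zero]
    intro w hw
    obtain ⟨i, hi, hgi⟩ := List.mem_take_iff_getElem.mp hw
    simp only [decide_eq_true_eq]
    intro hwX
    have := hmin i (by omega) (by rw [hgi]; exact hwX)
    omega
  have h4 : (q.support[n]?).toList.countP (fun w => decide (w ∈ X)) ≤ 1 := by
    refine le_trans List.countP_le_length ?_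
    rw [List.getElem?_eq_getElem hn]
    simp
  omega

lemma key {G : SimpleGraph V} {x y : V} {X : Finset V} {k : ℕ}
    (hX : MutVis G X k) (p : G.Walk x y) (hp : p.IsPath)
    (hiso : ∀ i j : Fin p.support.length,
      G.dist (p.support.get i) (p.support.get j) = ((i : ℤ) - (j : ℤ)).natAbs) :
    ∃ P : G.Walk x y, P.IsPath ∧ P.length = p.length ∧
      P.support.countP (fun w => decide (w ∈ X)) ≤ k + 2 := by
  classical
  have hsl : p.support.length = p.length + 1 := SimpleGraph.Walk.length_support _
  have h0 : p.support.get ⟨0, by omega⟩ = x := by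
    simp only [List.get_eq_getElem]
    rw [List.getElem_zero]
    exact p.head_support
  have h1 : p.support.get ⟨p.length, by omega⟩ = y := by
    simp only [List.get_eq_getElem]
    have hg := p.getLast_support
    rw [List.getLast_eq_getElem] at hg
    convert hg using 2
    omega
  have hd : G.dist x y = p.length := by
    have := hiso ⟨0, by omega⟩ ⟨p.length, by omega⟩
    rw [h0, h1] at this
    simpa using this
  by_cases hc : p.support.countP (fun w => decide (w ∈ X)) ≤ k + 2
  · exact ⟨p, hp, rfl, hc⟩
  push_neg at hc
  have hcnt := cnt p.support X hp.support_nodup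
  have h2lt : 1 < (p.support.toFinset.filter (fun w => w ∈ X)).card := by omega
  obtain ⟨w1, hw1, w2, hw2, hww⟩ := Finset.one_lt_card.mp h2lt
  rw [Finset.mem_filter, List.mem_toFinset] at hw1 hw2
  obtain ⟨i1, hi1⟩ := List.mem_iff_get.mp hw1.1
  obtain ⟨i2, hi2⟩ := List.mem_iff_get.mp hw2.1
  set I : Finset (Fin p.support.length) :=
    Finset.univ.filter (fun i => p.support.get i ∈ X) with hI
  have hi1I : i1 ∈ I := by
    simp only [hI, Finset.mem_filter, Finset.mem_univ, true_and]
    rw [hi1]; exact hw1.2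
  have hi2I : i2 ∈ I := by
    simp only [hI, Finset.mem_filter, Finset.mem_univ, true_and]
    rw [hi2]; exact hw2.2
  have HI : I.Nonempty := ⟨i1, hi1I⟩
  set a := I.min' HI with ha
  set b := I.max' HI with hb
  have haI : a ∈ I := I.min'_mem HI
  have hbI : b ∈ I := I.max'_mem HI
  have hinj := List.nodup_iff_injective_get.mp hp.support_nodup
  have hab : a < b := by
    rcases lt_or_ge a b with h | h
    · exact h
    · exfalso
      have e1 : i1 = i2 :=
        le_antisymm ((I.le_max' i1 hi1I).trans (h.trans (I.min'_le i2 hi2I)))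
          ((I.le_max' i2 hi2I).trans (h.trans (I.min'_le i1 hi1I)))
      exact hww (by rw [← hi1, ← hi2, e1])
  set u := p.support.get a with hu
  set v := p.support.get b with hv
  have huX : u ∈ X := (Finset.mem_filter.mp haI).2
  have hvX : v ∈ X := (Finset.mem_filter.mp hbI).2
  have huv : u ≠ v := fun h => absurd (hinj h) (ne_of_lt hab)
  have haltb : (a : ℕ) < (b : ℕ) := hab
  have hmin' : ∀ (j : ℕ) (hj : j < p.support.length), p.support[j] ∈ X → (a : ℕ) ≤ j := by
    intro j hj hjX
    exact I.min'_le ⟨j, hj⟩ (by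
      simp only [hI, Finset.mem_filter, Finset.mem_univ, true_and, List.get_eq_getElem]
      exact hjX)
  have hmax' : ∀ (j : ℕ) (hj : j < p.support.length), p.support[j] ∈ X → j ≤ (b : ℕ) := by
    intro j hj hjX
    exact I.le_max' ⟨j, hj⟩ (by
      simp only [hI, Finset.mem_filter, Finset.mem_univ, true_and, List.get_eq_getElem]
      exact hjX)
  -- prefix part
  have hu_s : u ∈ p.support := p.support.get_mem a
  obtain ⟨hlen1, hcnt1⟩ := aux X p hp hu_s (a : ℕ) a.isLt
    (List.get_eq_getElem (l := p.support) (i := a)).symm hmin'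
  set p1 := p.takeUntil u hu_s with hp1def
  -- suffix part via the reverse walk
  set r := p.reverse with hrdef
  have hrp : r.IsPath := hp.reverse
  have hrsl : r.support.length = p.length + 1 := by
    rw [hrdef, SimpleGraph.Walk.support_reverse, List.length_reverse]; omega
  have hv_r : v ∈ r.support := by
    rw [hrdef, SimpleGraph.Walk.support_reverse, List.mem_reverse]
    exact p.support.get_mem b
  have hble : (b : ℕ) ≤ p.length := by have := b.isLt; omega
  have hbig : p.length - (b : ℕ) < r.support.length := by omega
  have hgn2 : r.support[p.length - (b : ℕ)]'hbig = v := by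
    rw [List.getElem_of_eq (by rw [hrdef, SimpleGraph.Walk.support_reverse]) hbig,
      List.getElem_reverse,
      gE p.support (show p.support.length - 1 - (p.length - (b : ℕ)) = (b : ℕ) by omega)]
    exact (List.get_eq_getElem (l := p.support) (i := b)).symm
  have hmin2 : ∀ (j : ℕ) (hj : j < r.support.length), r.support[j] ∈ X →
      p.length - (b : ℕ) ≤ j := by
    intro j hj hjX
    rw [List.getElem_of_eq (by rw [hrdef, SimpleGraph.Walk.support_reverse]) hj,
      List.getElem_reverse] at hjX
    have := hmax' _ (by omega) hjX
    omega
  obtain ⟨hlen4, hcnt4⟩ := aux X r hrp hv_r (p.length - (b : ℕ)) hbig hgn2 hmin2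
  set p4 := (r.takeUntil v hv_r).reverse with hp4def
  have hlen4' : p4.length = p.length - (b : ℕ) := by
    rw [hp4def, SimpleGraph.Walk.length_reverse]; exact hlen4
  have hcnt4' : p4.support.countP (fun w => decide (w ∈ X)) ≤ 1 := by
    rw [hp4def, SimpleGraph.Walk.support_reverse, List.countP_eq_length_filter,
      List.filter_reverse, List.length_reverse, ← List.countP_eq_length_filter]
    exact hcnt4
  -- the shortest path between u and v
  obtain ⟨Q, hQp, hQl, hQi⟩ := hX u huX v hvX huv
  have hduv : G.dist u v = (b : ℕ) - (a : ℕ) := by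
    have h7 := hiso a b
    rw [← hu, ← hv] at h7
    omega
  have hQlen : Q.length = (b : ℕ) - (a : ℕ) := hQl.trans hduv
  set P := p1.append (Q.append p4) with hPdef
  have hPlen : P.length = p.length := by
    rw [hPdef, SimpleGraph.Walk.length_append, SimpleGraph.Walk.length_append,
      hlen1, hQlen, hlen4']
    omega
  have hPpath : P.IsPath := P.isPath_of_length_eq_dist (by rw [hPlen]; exact hd.symm)
  refine ⟨P, hPpath, hPlen, ?_⟩
  have hsupp : P.support.countP (fun w => decide (w ∈ X)) =
      p1.support.countP (fun w => decide (w ∈ X)) +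
      (Q.support.tail.countP (fun w => decide (w ∈ X)) +
        p4.support.tail.countP (fun w => decide (w ∈ X))) := by
    rw [hPdef, SimpleGraph.Walk.support_append, List.countP_append,
      SimpleGraph.Walk.tail_support_append, List.countP_append]
  have hQsl : Q.support.length = Q.length + 1 := SimpleGraph.Walk.length_support _
  have hQtl : Q.support.tail.length = Q.length := by
    rw [List.length_tail]; omega
  have hne : Q.support.tail ≠ [] := by
    intro h
    rw [h] at hQtl
    simp at hQtl
    omega
  have hQtail : Q.support.tail.countP (fun w => decide (w ∈ X)) ≤ k + 1 := by
    rw [← List.dropLast_append_getLast hne, List.countP_append]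
    have h5 : Q.support.tail.dropLast.countP (fun w => decide (w ∈ X)) ≤ k := hQi
    have h6 : [Q.support.tail.getLast hne].countP (fun w => decide (w ∈ X)) ≤ 1 :=
      le_trans List.countP_le_length (by simp)
    omega
  have hp4tail : p4.support.tail.countP (fun w => decide (w ∈ X)) = 0 := by
    have h6 : p4.support.countP (fun w => decide (w ∈ X)) =
        p4.support.tail.countP (fun w => decide (w ∈ X)) + 1 := by
      conv_lhs => rw [p4.support_eq_cons]
      rw [List.countP_cons_of_pos (p := fun w => decide (w ∈ X)) (a := v) (by simpa using hvX)]
    omega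
  rw [hsupp]
  omega

lemma stepB [Fintype V] {G : SimpleGraph V} {x y : V} (X : Finset V) (k l : ℕ)
    (P : G.Walk x y) (hP : P.IsPath) (hlen : P.length = l)
    (hc : P.support.countP (fun w => decide (w ∈ X)) ≤ k + 2) :
    X.card ≤ Fintype.card V - l + k + 1 := by
  classical
  have hTc : P.support.toFinset.card = l + 1 := by
    rw [List.toFinset_card_of_nodup hP.support_nodup, SimpleGraph.Walk.length_support, hlen]
  have hTle : P.support.toFinset.card ≤ Fintype.card V := Finset.card_le_univ _
  have h1 : (X ∩ P.support.toFinset).card ≤ k + 2 := by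
    have h5 : X ∩ P.support.toFinset = P.support.toFinset.filter (fun w => w ∈ X) := by
      rw [Finset.filter_mem_eq_inter, Finset.inter_comm]
    rw [h5, ← cnt _ _ hP.support_nodup]
    exact hc
  have h2 : (X \ P.support.toFinset).card ≤ Fintype.card V - P.support.toFinset.card := by
    have h5 : X \ P.support.toFinset ⊆ P.support.toFinsetᶜ := by
      intro w hw
      rw [Finset.mem_sdiff] at hw
      rw [Finset.mem_compl]
      exact hw.2
    calc (X \ P.support.toFinset).card ≤ P.support.toFinsetᶜ.card := Finset.card_le_card h5
      _ = Fintype.card V - P.support.toFinset.card := Finset.card_compl _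
  have h3 := Finset.card_inter_add_card_sdiff X P.support.toFinset
  omega

theorem stmt10 [Fintype V] (G : SimpleGraph V) (hG : G.Connected) (k : ℕ)
    {x y : V} (p : G.Walk x y) (hp : p.IsPath) (l : ℕ) (hlen : p.length = l)
    (hiso : ∀ i j : Fin p.support.length,
      G.dist (p.support.get i) (p.support.get j) = ((i : ℤ) - (j : ℤ)).natAbs) :
    muK G k ≤ Fintype.card V - l + k + 1 := by
  refine csSup_le' ?_
  rintro nn ⟨X, hXv, rfl⟩
  obtain ⟨P, hPp, hPl, hPc⟩ := key hXv p hp hiso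
  exact stepB X k l P hPp (hPl.trans hlen) hPc
end

section
/- For the path P_n on n ≥ 1 vertices and any k ≥ 0, μ_k(P_n) = min{n, k + 2}. -/
open scoped Classical

variable {V : Type*}

namespace PGaux

variable {n : ℕ}

lemma adj_val {u v : Fin n} (h : (SimpleGraph.pathGraph n).Adj u v) :
    u.val + 1 = v.val ∨ v.val + 1 = u.val :=
  (SimpleGraph.pathGraph_adj).1 h

lemma length_ge {u v : Fin n} (p : (SimpleGraph.pathGraph n).Walk u v) :
    v.val - u.val ≤ p.length ∧ u.val - v.val ≤ p.length := by
  induction p with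
  | nil => simp
  | cons h q ih =>
    have := adj_val h
    simp only [SimpleGraph.Walk.length_cons]
    omega

/-- intermediate value: a walk hits every value between its endpoints. -/
lemma exists_val_mem {u v : Fin n} (p : (SimpleGraph.pathGraph n).Walk u v) (c : ℕ)
    (hc : (u.val ≤ c ∧ c ≤ v.val) ∨ (v.val ≤ c ∧ c ≤ u.val)) :
    ∃ x ∈ p.support, x.val = c := by
  induction p with
  | nil => exact ⟨_, SimpleGraph.Walk.start_mem_support _, by omega⟩
  | @cons a w b h q ih =>
    have hadj := adj_val h
    by_cases hc' : (w.val ≤ c ∧ c ≤ b.val) ∨ (b.val ≤ c ∧ c ≤ w.val)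
    · obtain ⟨x, hx, hxc⟩ := ih hc'
      exact ⟨x, by simp [hx], hxc⟩
    · exact ⟨a, by simp, by omega⟩

/-- the increasing walk from `u` to `v` of length `d = v - u`. -/
def walkUp : (d : ℕ) → (u v : Fin n) → u.val + d = v.val →
    (SimpleGraph.pathGraph n).Walk u v
  | 0, u, v, h =>
    (SimpleGraph.Walk.nil : (SimpleGraph.pathGraph n).Walk u u).copy rfl
      (Fin.ext (by omega))
  | d + 1, u, v, h =>
    SimpleGraph.Walk.cons
      (show (SimpleGraph.pathGraph n).Adj u ⟨u.val + 1, by have := v.isLt; omega⟩ by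
        rw [SimpleGraph.pathGraph_adj]; left; rfl)
      (walkUp d ⟨u.val + 1, by have := v.isLt; omega⟩ v (by simp; omega))

lemma walkUp_length (d : ℕ) : ∀ (u v : Fin n) (h : u.val + d = v.val),
    (walkUp d u v h).length = d := by
  induction d with
  | zero => intro u v h; simp [walkUp]
  | succ d ih => intro u v h; simp [walkUp, ih]

lemma walkUp_support_val (d : ℕ) : ∀ (u v : Fin n) (h : u.val + d = v.val),
    ∀ x ∈ (walkUp d u v h).support, u.val ≤ x.val := by
  induction d with
  | zero =>
    intro u v h x hx
    simp [walkUp] at hx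
    omega
  | succ d ih =>
    intro u v h x hx
    simp only [walkUp, SimpleGraph.Walk.support_cons, List.mem_cons] at hx
    rcases hx with rfl | hx
    · exact le_refl _
    · have := ih _ v (by simp; omega) x hx
      simp at this; omega

lemma walkUp_isPath (d : ℕ) : ∀ (u v : Fin n) (h : u.val + d = v.val),
    (walkUp d u v h).IsPath := by
  induction d with
  | zero => intro u v h; simp [walkUp]
  | succ d ih =>
    intro u v h
    rw [walkUp, SimpleGraph.Walk.cons_isPath_iff]
    refine ⟨ih _ _ _, fun hmem => ?_⟩
    have := walkUp_support_val d _ v (by simp; omega) u hmem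
    simp at this

lemma dist_eq (u v : Fin n) (huv : u.val ≤ v.val) :
    (SimpleGraph.pathGraph n).dist u v = v.val - u.val := by
  have h : u.val + (v.val - u.val) = v.val := by omega
  have h1 : (SimpleGraph.pathGraph n).dist u v ≤ v.val - u.val := by
    have := SimpleGraph.dist_le (walkUp (v.val - u.val) u v h)
    rwa [walkUp_length] at this
  have hr : (SimpleGraph.pathGraph n).Reachable u v := (walkUp (v.val - u.val) u v h).reachable
  obtain ⟨q, hq⟩ := hr.exists_walk_length_eq_dist
  have h2 := (length_ge q).1
  omega

lemma internalCount_le {u v : Fin n} (p : (SimpleGraph.pathGraph n).Walk u v)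
    (X : Finset (Fin n)) : internalCount p X ≤ p.length - 1 := by
  calc internalCount p X ≤ p.support.tail.dropLast.length := List.countP_le_length
    _ = p.length - 1 := by
        rw [List.length_dropLast, List.length_tail, SimpleGraph.Walk.length_support]
        omega

lemma mem_internal {u v x : V} {G : SimpleGraph V} (p : G.Walk u v)
    (hx : x ∈ p.support) (hxu : x ≠ u) (hxv : x ≠ v) :
    x ∈ p.support.tail.dropLast := by
  have hsupp : p.support = u :: p.support.tail := by
    rw [← SimpleGraph.Walk.support_eq_cons]
  have hx' : x ∈ p.support.tail := by
    rw [hsupp] at hx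
    rcases List.mem_cons.1 hx with rfl | h
    · exact absurd rfl hxu
    · exact h
  have hne : p.support.tail ≠ [] := List.ne_nil_of_mem hx'
  have hlast : p.support.tail.getLast hne = v := by
    rw [List.getLast_tail]
    exact p.getLast_support
  have := List.dropLast_append_getLast hne
  rw [← this] at hx'
  rcases List.mem_append.1 hx' with h | h
  · exact h
  · simp [hlast] at h
    exact absurd h hxv

end PGaux

theorem stmt11 (n k : ℕ) (hn : 1 ≤ n) :
    muK (SimpleGraph.pathGraph n) k = min n (k + 2) := by
  classical
  set G := SimpleGraph.pathGraph n with hG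
  set S : Set ℕ := {N | ∃ X : Finset (Fin n), MutVis G X k ∧ X.card = N} with hS
  have hbdd : ∀ N ∈ S, N ≤ n := by
    rintro N ⟨X, -, rfl⟩
    simpa using X.card_le_univ
  have hBdd : BddAbove S := ⟨n, fun N hN => hbdd N hN⟩
  have hne : S.Nonempty := ⟨0, ∅, by intro u hu; simp at hu, rfl⟩
  set m := min n (k + 2) with hm
  have hmn : m ≤ n := min_le_left _ _
  have hmk : m ≤ k + 2 := min_le_right _ _
  -- the witness set: the first m vertices
  have hlower : m ∈ S := by
    refine ⟨(Finset.univ : Finset (Fin m)).map (Fin.castLEEmb hmn), ?_, by simp⟩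
    have hmemX : ∀ x : Fin n,
        x ∈ (Finset.univ : Finset (Fin m)).map (Fin.castLEEmb hmn) ↔ x.val < m := by
      intro x
      simp only [Finset.mem_map, Finset.mem_univ, true_and]
      constructor
      · rintro ⟨y, rfl⟩; simp
      · intro hx; exact ⟨⟨x.val, hx⟩, by ext; simp⟩
    intro u hu v hv huv
    rw [hmemX] at hu hv
    have hvals : u.val ≠ v.val := fun h => huv (Fin.ext h)
    rcases lt_or_gt_of_ne hvals with hlt | hlt
    · refine ⟨PGaux.walkUp (v.val - u.val) u v (by omega), PGaux.walkUp_isPath _ _ _ _, ?_, ?_⟩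
      · rw [PGaux.walkUp_length, PGaux.dist_eq u v (by omega)]
      · refine le_trans (PGaux.internalCount_le _ _) ?_
        rw [PGaux.walkUp_length]
        omega
    · refine ⟨(PGaux.walkUp (u.val - v.val) v u (by omega)).reverse,
        (PGaux.walkUp_isPath _ _ _ _).reverse, ?_, ?_⟩
      · rw [SimpleGraph.Walk.length_reverse, PGaux.walkUp_length,
          SimpleGraph.dist_comm, PGaux.dist_eq v u (by omega)]
      · refine le_trans (PGaux.internalCount_le _ _) ?_
        rw [SimpleGraph.Walk.length_reverse, PGaux.walkUp_length]
        omega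
  -- upper bound
  have hupper : ∀ N ∈ S, N ≤ m := by
    rintro N ⟨X, hX, rfl⟩
    rcases le_or_gt X.card 1 with h1 | h1
    · omega
    have hXne : X.Nonempty := Finset.card_pos.1 (by omega)
    set u := X.min' hXne with hu
    set v := X.max' hXne with hv
    have huX : u ∈ X := X.min'_mem hXne
    have hvX : v ∈ X := X.max'_mem hXne
    have huvne : u ≠ v := ne_of_lt (Finset.min'_lt_max'_of_card X h1)
    obtain ⟨p, hpath, hplen, hpcount⟩ := hX u huX v hvX huvne
    -- every element of X other than u, v lies in the internal support
    have hmem : ∀ x ∈ X, x ≠ u → x ≠ v → x ∈ p.support.tail.dropLast := by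
      intro x hx hxu hxv
      have hc : (u.val ≤ x.val ∧ x.val ≤ v.val) ∨ (v.val ≤ x.val ∧ x.val ≤ u.val) :=
        Or.inl ⟨X.min'_le x hx, X.le_max' x hx⟩
      obtain ⟨y, hy, hyval⟩ := PGaux.exists_val_mem p x.val hc
      have : y = x := Fin.ext hyval
      subst this
      exact PGaux.mem_internal p hy hxu hxv
    -- count
    have hnodup : p.support.tail.dropLast.Nodup :=
      (hpath.support_nodup.sublist (List.tail_sublist _)).sublist (List.dropLast_sublist _)
    have hsub : X \ {u, v} ⊆ p.support.tail.dropLast.toFinset := by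
      intro x hx
      rw [Finset.mem_sdiff] at hx
      rw [List.mem_toFinset]
      refine hmem x hx.1 ?_ ?_ <;> intro h <;> apply hx.2 <;> simp [h]
    have hcard : X.card ≤ internalCount p X + 2 := by
      have h2 : ({u, v} : Finset (Fin n)).card = 2 := by
        rw [Finset.card_insert_of_notMem (by simp [huvne]), Finset.card_singleton]
      have hsub2 : ({u, v} : Finset (Fin n)) ⊆ X := by
        intro x hx; rcases Finset.mem_insert.1 hx with rfl | hx
        · exact huX
        · rw [Finset.mem_singleton] at hx; subst hx; exact hvX
      have hcs : (X \ {u, v}).card = X.card - 2 := by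
        rw [Finset.card_sdiff_of_subset hsub2, h2]
      have hfilter : X \ {u, v} ⊆
          (p.support.tail.dropLast.filter (fun x => decide (x ∈ X))).toFinset := by
        intro x hx
        rw [List.mem_toFinset, List.mem_filter]
        exact ⟨(List.mem_toFinset).1 (hsub hx), by
          simp [(Finset.mem_sdiff.1 hx).1]⟩
      have : X.card - 2 ≤ internalCount p X := by
        calc X.card - 2 = (X \ {u, v}).card := hcs.symm
          _ ≤ (p.support.tail.dropLast.filter (fun x => decide (x ∈ X))).toFinset.card :=
              Finset.card_le_card hfilter
          _ ≤ (p.support.tail.dropLast.filter (fun x => decide (x ∈ X))).length :=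
              (p.support.tail.dropLast.filter _).toFinset_card_le
          _ = internalCount p X := by
              rw [internalCount, List.countP_eq_length_filter]
              congr!
      omega
    have hcn : X.card ≤ n := by simpa using X.card_le_univ
    omega
  rw [muK]
  exact le_antisymm (csSup_le hne hupper) (le_csSup hBdd hlower)
end

section
/- For the cycle C_n with n ≥ 3 and any integer k with 0 ≤ k ≤ n − 2, μ_k(C_n) = min{n, 2k + 3}. -/
open scoped Classical

variable {V : Type*}

section CycleLemmas

open Fin.NatCast Fin.CommRing

variable {n : ℕ}

lemma subval [NeZero n] (a b : Fin n) :
    (a - b).val = if b.val ≤ a.val then a.val - b.val else a.val + n - b.val := by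
  have hb : b.val < n := b.isLt
  have ha : a.val < n := a.isLt
  rw [Fin.sub_def]
  simp only []
  split_ifs with h
  · rcases Nat.eq_or_lt_of_le h with h' | h'
    · rw [h']
      have : (n - a.val + a.val) = n := by omega
      rw [this, Nat.mod_self]; omega
    · have : (n - b.val + a.val) = (a.val - b.val) + n := by omega
      rw [this, Nat.add_mod_right, Nat.mod_eq_of_lt (by omega)]
  · rw [Nat.mod_eq_of_lt (by omega)]; omega

lemma addval [NeZero n] (u : Fin n) (c : ℕ) : (u + (c : Fin n)).val = (u.val + c) % n := by
  rw [Fin.add_def]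
  simp [Nat.add_mod]

lemma addval' [NeZero n] (u : Fin n) (c : ℕ) (h : u.val + c < n) :
    (u + (c : Fin n)).val = u.val + c := by
  rw [addval, Nat.mod_eq_of_lt h]

/-- the cyclic pseudo-distance -/
def cd [NeZero n] (u v : Fin n) : ℕ := min (v - u).val (u - v).val

lemma cd_lt [NeZero n] (u v : Fin n) : cd u v < n := by
  have := (v - u).isLt
  have := (u - v).isLt
  unfold cd; omega

lemma cd_vals [NeZero n] (u v : Fin n) :
    (u - v).val = 0 ∧ (v - u).val = 0 ∨ (u - v).val = n - (v - u).val ∧ (v - u).val ≠ 0 := by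
  have h1 := subval u v
  have h2 := subval v u
  have hu := u.isLt; have hv := v.isLt
  rcases eq_or_ne u v with rfl | hne
  · left; constructor <;> (split_ifs at h1 h2 <;> omega)
  · right
    have : u.val ≠ v.val := fun h => hne (Fin.ext h)
    constructor <;> (split_ifs at h1 h2 <;> omega)

lemma cd_zero_iff [NeZero n] {u v : Fin n} : cd u v = 0 ↔ u = v := by
  constructor
  · intro h
    rcases cd_vals u v with ⟨h1, h2⟩ | ⟨h1, h2⟩
    · have : v - u = 0 := Fin.ext h2
      have := sub_eq_zero.mp this; exact this.symm
    · unfold cd at h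
      have hlt := (v-u).isLt
      omega
  · rintro rfl; unfold cd; simp


lemma cd_step [NeZero n] {u v w : Fin n} (h : (SimpleGraph.cycleGraph n).Adj u w) :
    cd u v ≤ cd w v + 1 := by
  have hy := (v - w).isLt
  have hy' := (w - v).isLt
  rcases SimpleGraph.cycleGraph_adj'.mp h with hw | hw
  · -- (u - w).val = 1, i.e. u = w + 1
    have e1 : (u - v) = (w - v) + (u - w) := by ring
    have e2 : (u - v).val = ((w - v).val + 1) % n := by rw [e1, Fin.add_def, hw]
    have e3 : (u-v).val = (w-v).val + 1 ∨ ((w-v).val + 1 = n ∧ (u-v).val = 0) := by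
      rcases Nat.lt_or_ge ((w-v).val + 1) n with h' | h'
      · left; rw [e2, Nat.mod_eq_of_lt h']
      · right
        have : (w-v).val + 1 = n := by omega
        rw [this] at e2; simp at e2; exact ⟨this, by simp [e2]⟩
    rcases cd_vals u v with ⟨a1, a2⟩ | ⟨a1, a2⟩ <;>
      rcases cd_vals w v with ⟨b1, b2⟩ | ⟨b1, b2⟩ <;>
      (unfold cd; omega)
  · -- (w - u).val = 1
    have e1 : (v - u) = (v - w) + (w - u) := by ring
    have e2 : (v - u).val = ((v - w).val + 1) % n := by rw [e1, Fin.add_def, hw]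
    have e3 : (v-u).val = (v-w).val + 1 ∨ ((v-w).val + 1 = n ∧ (v-u).val = 0) := by
      rcases Nat.lt_or_ge ((v-w).val + 1) n with h' | h'
      · left; rw [e2, Nat.mod_eq_of_lt h']
      · right
        have : (v-w).val + 1 = n := by omega
        rw [this] at e2; simp at e2; exact ⟨this, by simp [e2]⟩
    rcases cd_vals u v with ⟨a1, a2⟩ | ⟨a1, a2⟩ <;>
      rcases cd_vals w v with ⟨b1, b2⟩ | ⟨b1, b2⟩ <;>
      (unfold cd; omega)

lemma cd_le_walk [NeZero n] {u v : Fin n} (p : (SimpleGraph.cycleGraph n).Walk u v) :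
    cd u v ≤ p.length := by
  induction p with
  | nil => simp [cd]
  | @cons a b c h q ih =>
    have := cd_step (v := c) h
    simp only [SimpleGraph.Walk.length_cons]
    omega

lemma adj_succ [NeZero n] (hn : 1 < n) (u : Fin n) : (SimpleGraph.cycleGraph n).Adj u (u + 1) := by
  rw [SimpleGraph.cycleGraph_adj']
  right
  have : u + 1 - u = 1 := by ring
  rw [this, Fin.val_one', Nat.mod_eq_of_lt hn]

def arcW [NeZero n] (hn : 1 < n) : (u : Fin n) → (d : ℕ) → (SimpleGraph.cycleGraph n).Walk u (u + (d : Fin n))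
  | u, 0 => SimpleGraph.Walk.nil.copy rfl (by simp)
  | u, d+1 => ((arcW hn (u+1) d).cons (adj_succ hn u)).copy rfl (by push_cast; ring)

lemma arcW_length [NeZero n] (hn : 1 < n) (u : Fin n) (d : ℕ) : (arcW hn u d).length = d := by
  induction d generalizing u with
  | zero => simp [arcW]
  | succ d ih => simp [arcW, ih]

lemma arcW_support [NeZero n] (hn : 1 < n) (u : Fin n) (d : ℕ) :
    (arcW hn u d).support = (List.range (d+1)).map (fun j : ℕ => u + (j : Fin n)) := by
  induction d generalizing u with
  | zero =>
    simp only [arcW, SimpleGraph.Walk.support_copy, SimpleGraph.Walk.support_nil,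
      List.map_cons, List.map_nil, Nat.cast_zero, add_zero]
    norm_num [List.range_succ]
  | succ d ih =>
    rw [List.range_succ_eq_map]
    simp only [arcW, SimpleGraph.Walk.support_copy, SimpleGraph.Walk.support_cons, ih,
      List.map_cons, List.map_map]
    congr 1
    · simp
    · apply List.map_congr_left
      intro j hj
      show (u + 1) + (j : Fin n) = u + ((j+1 : ℕ) : Fin n)
      push_cast; ring

lemma cyc_dist [NeZero n] (hn : 1 < n) (u v : Fin n) :
    (SimpleGraph.cycleGraph n).dist u v = cd u v := by
  apply _root_.le_antisymm
  · apply le_min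
    · have e : u + (((v - u).val : ℕ) : Fin n) = v := by
        rw [Fin.cast_val_eq_self]; ring
      have := SimpleGraph.dist_le ((arcW hn u (v - u).val).copy rfl e)
      rwa [SimpleGraph.Walk.length_copy, arcW_length] at this
    · have e : v + (((u - v).val : ℕ) : Fin n) = u := by
        rw [Fin.cast_val_eq_self]; ring
      have := SimpleGraph.dist_le (((arcW hn v (u - v).val).copy rfl e).reverse)
      rwa [SimpleGraph.Walk.length_reverse, SimpleGraph.Walk.length_copy, arcW_length] at this
  · obtain ⟨p, hp⟩ := (SimpleGraph.cycleGraph_preconnected u v).exists_walk_length_eq_dist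
    rw [← hp]
    exact cd_le_walk p


lemma one_val [NeZero n] (hn : 1 < n) : (1 : Fin n).val = 1 := by
  rw [Fin.val_one']; exact Nat.mod_eq_of_lt hn

lemma geo_support [NeZero n] (hn : 1 < n) {u v : Fin n}
    (p : (SimpleGraph.cycleGraph n).Walk u v) (hp : p.length = cd u v) :
    ((v - u).val = p.length ∧
      p.support = (List.range (p.length+1)).map (fun j : ℕ => u + (j : Fin n))) ∨
    ((u - v).val = p.length ∧
      p.support = (List.range (p.length+1)).map (fun j : ℕ => u - (j : Fin n))) := by
  induction p with
  | nil =>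
    left
    constructor
    · simp
    · norm_num [List.range_succ]
  | @cons u w v h q ih =>
    rw [SimpleGraph.Walk.length_cons] at hp ⊢
    have h1 : cd w v ≤ q.length := cd_le_walk q
    have h2 : cd u v ≤ cd w v + 1 := cd_step h
    have hcdlt : cd u v < n := cd_lt u v
    have hq : q.length = cd w v := by omega
    have IH := ih hq
    have h1v : (1 : Fin n).val = 1 := one_val hn
    rcases SimpleGraph.cycleGraph_adj'.mp h with hw | hw
    · -- (u - w).val = 1, w = u - 1, going "down"
      have ew : w = u - 1 := by
        have : u - w = 1 := Fin.ext (by rw [hw, h1v])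
        rw [sub_eq_iff_eq_add] at this
        rw [this]; ring
      rcases IH with ⟨e, hs⟩ | ⟨e, hs⟩
      · -- q goes up
        rcases Nat.eq_zero_or_pos q.length with h0 | hpos
        · -- w = v
          have hwv : w = v := by
            have : (v - w) = 0 := Fin.ext (by rw [e, h0]; rfl)
            have := sub_eq_zero.mp this; exact this.symm
          subst hwv
          right
          constructor
          · rw [hw, h0]
          · rw [SimpleGraph.Walk.support_cons, hs, h0]
            have l1 : List.range 1 = [0] := rfl
            have l2 : List.range (0+1+1) = [0, 1] := rfl
            rw [l1, l2]
            simp only [List.map_cons, List.map_nil, Nat.cast_zero, Nat.cast_one,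
              sub_zero, add_zero]
            rw [ew]
        · -- contradiction
          exfalso
          have e1 : v - u = (v - w) - (u - w) := by ring
          have e2 : (v - u).val = q.length - 1 := by
            rw [e1, subval]
            have : (u - w).val = 1 := hw
            rw [this, e]
            simp [Nat.one_le_iff_ne_zero.mpr (Nat.pos_iff_ne_zero.mp hpos)]
          have : cd u v ≤ (v - u).val := min_le_left _ _
          omega
      · -- q goes down too
        right
        have e1 : (u - v) = (w - v) + (u - w) := by ring
        have e2 : (u - v).val = (q.length + 1) % n := by
          rw [e1, Fin.add_def, hw, e]
        have e3 : (u - v).val = q.length + 1 := by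
          rw [e2, Nat.mod_eq_of_lt (by omega)]
        refine ⟨e3, ?_⟩
        rw [SimpleGraph.Walk.support_cons, hs]
        conv_rhs => rw [List.range_succ_eq_map]
        rw [List.map_cons, List.map_map]
        congr 1
        · simp
        · apply List.map_congr_left
          intro j hj
          show w - (j : Fin n) = u - ((j+1 : ℕ) : Fin n)
          rw [ew]; push_cast; ring
    · -- (w - u).val = 1, w = u + 1, going "up"
      have ew : w = u + 1 := by
        have : w - u = 1 := Fin.ext (by rw [hw, h1v])
        rw [sub_eq_iff_eq_add] at this
        rw [this]; ring
      rcases IH with ⟨e, hs⟩ | ⟨e, hs⟩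
      · -- q goes up too
        left
        have e1 : (v - u) = (v - w) + (w - u) := by ring
        have e2 : (v - u).val = (q.length + 1) % n := by
          rw [e1, Fin.add_def, hw, e]
        have e3 : (v - u).val = q.length + 1 := by
          rw [e2, Nat.mod_eq_of_lt (by omega)]
        refine ⟨e3, ?_⟩
        rw [SimpleGraph.Walk.support_cons, hs]
        conv_rhs => rw [List.range_succ_eq_map]
        rw [List.map_cons, List.map_map]
        congr 1
        · simp
        · apply List.map_congr_left
          intro j hj
          show w + (j : Fin n) = u + ((j+1 : ℕ) : Fin n)
          rw [ew]; push_cast; ring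
      · -- q goes down
        rcases Nat.eq_zero_or_pos q.length with h0 | hpos
        · have hwv : w = v := by
            have : (w - v) = 0 := Fin.ext (by rw [e, h0]; rfl)
            exact sub_eq_zero.mp this
          subst hwv
          left
          constructor
          · rw [hw, h0]
          · rw [SimpleGraph.Walk.support_cons, hs, h0]
            have l1 : List.range 1 = [0] := rfl
            have l2 : List.range (0+1+1) = [0, 1] := rfl
            rw [l1, l2]
            simp only [List.map_cons, List.map_nil, Nat.cast_zero, Nat.cast_one,
              sub_zero, add_zero]
            rw [ew]
        · exfalso
          have e1 : u - v = (w - v) - (w - u) := by ring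
          have e2 : (u - v).val = q.length - 1 := by
            rw [e1, subval]
            have : (w - u).val = 1 := hw
            rw [this, e]
            simp [Nat.one_le_iff_ne_zero.mpr (Nat.pos_iff_ne_zero.mp hpos)]
          have : cd u v ≤ (u - v).val := min_le_right _ _
          omega


lemma dropLast_tail {α : Type*} (l : List α) : l.dropLast.tail = l.tail.dropLast := by
  induction l with
  | nil => simp
  | cons a l ih =>
    cases l with
    | nil => simp
    | cons b l' => simp [List.dropLast_cons₂]

lemma internalCount_reverse {G : SimpleGraph V} {u v : V} (p : G.Walk u v) (X : Finset V) :
    internalCount p.reverse X = internalCount p X := by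
  unfold internalCount
  rw [SimpleGraph.Walk.support_reverse, List.tail_reverse, List.dropLast_reverse,
    dropLast_tail, List.countP_reverse]

lemma countP_range (m : ℕ) (Q : ℕ → Prop) [DecidablePred Q] :
    (List.range m).countP (fun j => decide (Q j)) = ((Finset.range m).filter Q).card := by
  induction m with
  | zero => simp
  | succ m ih =>
    rw [List.range_succ, Finset.range_add_one, List.countP_append, Finset.filter_insert]
    by_cases h : Q m
    · rw [if_pos h, Finset.card_insert_of_notMem (by simp)]
      simp [h, ih]
    · rw [if_neg h]
      simp [h, ih]

lemma internalCount_eq {n : ℕ} [NeZero n] {G : SimpleGraph (Fin n)} {u v : Fin n}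
    (p : G.Walk u v) (f : ℕ → Fin n) (d : ℕ)
    (hs : p.support = (List.range (d+1)).map f) (X : Finset (Fin n)) :
    internalCount p X = ((Finset.range (d-1)).filter (fun j => f (j+1) ∈ X)).card := by
  unfold internalCount
  rw [hs, List.range_succ_eq_map, List.map_cons, List.tail_cons, List.map_map]
  have hdl : ((List.range d).map (f ∘ Nat.succ)).dropLast
      = (List.range (d-1)).map (f ∘ Nat.succ) := by
    cases d with
    | zero => simp
    | succ m =>
      rw [List.range_succ, List.map_append]
      simp
  rw [hdl, List.countP_map]
  convert countP_range (d-1) (fun j => f (j+1) ∈ X) using 2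
  funext j
  simp only [Function.comp_apply, decide_eq_decide, Nat.succ_eq_add_one]



lemma sub_val_ne {m : ℕ} [NeZero m] {a b : Fin m} (h : a ≠ b) : (a - b).val ≠ 0 := by
  intro h0
  exact h (by rw [← sub_eq_zero]; exact Fin.ext h0)

lemma add_cast_sub_self [NeZero n] (u : Fin n) (c : ℕ) (hc : c < n) :
    ((u + (c : Fin n)) - u).val = c := by
  have : u + (c : Fin n) - u = (c : Fin n) := by ring
  rw [this, Fin.val_natCast, Nat.mod_eq_of_lt hc]

lemma sub_cast_sub_self [NeZero n] (u : Fin n) (c : ℕ) (hc1 : 1 ≤ c) (hc : c < n) :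
    ((u - (c : Fin n)) - u).val = n - c := by
  have : u - (c : Fin n) - u = -(c : Fin n) := by ring
  rw [this, Fin.coe_neg, Fin.val_natCast, Nat.mod_eq_of_lt hc, Nat.mod_eq_of_lt (by omega)]

/-- count of the interior of the "up" arc from `u` of length `t` equals the number of
elements of `X` other than `u` with offset `< t`. -/
lemma up_arc_count [NeZero n] (u : Fin n) (X : Finset (Fin n)) (t : ℕ) (ht : t < n) :
    ((Finset.range (t-1)).filter (fun j => u + ((j+1 : ℕ) : Fin n) ∈ X)).card
      = ((X.erase u).filter (fun w => (w - u).val < t)).card := by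
  apply Finset.card_bij (fun j _ => u + ((j+1 : ℕ) : Fin n))
  · intro j hj
    simp only [Finset.mem_filter, Finset.mem_range] at hj
    have hlt : j + 1 < n := by omega
    have hv := add_cast_sub_self u (j+1) hlt
    simp only [Finset.mem_filter, Finset.mem_erase]
    refine ⟨⟨?_, hj.2⟩, ?_⟩
    · intro he
      rw [he] at hv
      simp at hv
    · rw [hv]; omega
  · intro j1 h1 j2 h2 he
    simp only [Finset.mem_filter, Finset.mem_range] at h1 h2
    have e1 := add_cast_sub_self u (j1+1) (by omega)
    have e2 := add_cast_sub_self u (j2+1) (by omega)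
    rw [he] at e1
    omega
  · intro w hw
    simp only [Finset.mem_filter, Finset.mem_erase] at hw
    obtain ⟨⟨hwu, hwX⟩, hwt⟩ := hw
    have hc0 : (w - u).val ≠ 0 := sub_val_ne hwu
    refine ⟨(w - u).val - 1, ?_, ?_⟩
    · simp only [Finset.mem_filter, Finset.mem_range]
      have : ((w - u).val - 1) + 1 = (w - u).val := by omega
      rw [this]
      constructor
      · omega
      · rw [Fin.cast_val_eq_self]
        have : u + (w - u) = w := by ring
        rw [this]; exact hwX
    · have : ((w - u).val - 1) + 1 = (w - u).val := by omega
      rw [this, Fin.cast_val_eq_self]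
      ring

lemma down_arc_count [NeZero n] (u : Fin n) (X : Finset (Fin n)) (t : ℕ) (ht1 : 1 ≤ t)
    (ht : t < n) :
    ((Finset.range (n-t-1)).filter (fun j => u - ((j+1 : ℕ) : Fin n) ∈ X)).card
      = ((X.erase u).filter (fun w => t < (w - u).val)).card := by
  apply Finset.card_bij (fun j _ => u - ((j+1 : ℕ) : Fin n))
  · intro j hj
    simp only [Finset.mem_filter, Finset.mem_range] at hj
    have hv := sub_cast_sub_self u (j+1) (by omega) (by omega)
    simp only [Finset.mem_filter, Finset.mem_erase]
    refine ⟨⟨?_, hj.2⟩, ?_⟩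
    · intro he
      rw [he] at hv
      simp at hv
      omega
    · rw [hv]; omega
  · intro j1 h1 j2 h2 he
    simp only [Finset.mem_filter, Finset.mem_range] at h1 h2
    have e1 := sub_cast_sub_self u (j1+1) (by omega) (by omega)
    have e2 := sub_cast_sub_self u (j2+1) (by omega) (by omega)
    rw [he] at e1
    omega
  · intro w hw
    simp only [Finset.mem_filter, Finset.mem_erase] at hw
    obtain ⟨⟨hwu, hwX⟩, hwt⟩ := hw
    have hlt := (w - u).isLt
    refine ⟨n - (w - u).val - 1, ?_, ?_⟩
    · simp only [Finset.mem_filter, Finset.mem_range]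
      have he : (n - (w - u).val - 1) + 1 = n - (w - u).val := by omega
      rw [he]
      constructor
      · omega
      · have hcast : ((n - (w - u).val : ℕ) : Fin n) = -((w - u).val : Fin n) := by
          have h1 : ((n - (w - u).val : ℕ) : Fin n) + (((w - u).val : ℕ) : Fin n) = 0 := by
            rw [← Nat.cast_add]
            have : n - (w - u).val + (w - u).val = n := by omega
            rw [this]
            exact Fin.natCast_self n
          linear_combination h1
        rw [hcast, Fin.cast_val_eq_self]
        have : u - -(w - u) = w := by ring
        rw [this]; exact hwX
    · have he : (n - (w - u).val - 1) + 1 = n - (w - u).val := by omega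
      rw [he]
      have hcast : ((n - (w - u).val : ℕ) : Fin n) = -((w - u).val : Fin n) := by
        have h1 : ((n - (w - u).val : ℕ) : Fin n) + (((w - u).val : ℕ) : Fin n) = 0 := by
          rw [← Nat.cast_add]
          have : n - (w - u).val + (w - u).val = n := by omega
          rw [this]
          exact Fin.natCast_self n
        linear_combination h1
      rw [hcast, Fin.cast_val_eq_self]
      ring

lemma pos_lemma : ∀ (j : ℕ) (S : Finset ℕ), j < S.card →
    ∃ t ∈ S, (S.filter (· < t)).card = j := by
  intro j
  induction j with
  | zero =>
    intro S hS
    have hne : S.Nonempty := Finset.card_pos.mp (by omega)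
    refine ⟨S.min' hne, S.min'_mem hne, ?_⟩
    rw [Finset.card_eq_zero, Finset.filter_eq_empty_iff]
    intro x hx
    simp only [not_lt]
    exact S.min'_le x hx
  | succ j ih =>
    intro S hS
    have hne : S.Nonempty := Finset.card_pos.mp (by omega)
    set m := S.min' hne with hm
    obtain ⟨t, ht, hcard⟩ := ih (S.erase m)
      (by rw [Finset.card_erase_of_mem (S.min'_mem hne)]; omega)
    have htS : t ∈ S := Finset.mem_of_mem_erase ht
    have hmt : m < t := by
      have h1 : m ≤ t := S.min'_le t htS
      have h2 : t ≠ m := Finset.ne_of_mem_erase ht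
      omega
    refine ⟨t, htS, ?_⟩
    have hsplit : S.filter (· < t) = insert m ((S.erase m).filter (· < t)) := by
      ext x
      simp only [Finset.mem_filter, Finset.mem_insert, Finset.mem_erase]
      constructor
      · rintro ⟨hxS, hxt⟩
        by_cases hxm : x = m
        · left; exact hxm
        · right; exact ⟨⟨hxm, hxS⟩, hxt⟩
      · rintro (rfl | ⟨⟨_, hxS⟩, hxt⟩)
        · exact ⟨S.min'_mem hne, hmt⟩
        · exact ⟨hxS, hxt⟩
    rw [hsplit, Finset.card_insert_of_notMem (by simp [Finset.mem_filter, Finset.mem_erase]),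
      hcard]

lemma card_le_upper [NeZero n] (hn3 : 3 ≤ n) (k : ℕ)
    (X : Finset (Fin n)) (hX : MutVis (SimpleGraph.cycleGraph n) X k) : X.card ≤ 2*k+3 := by
  by_contra hc
  push_neg at hc
  have hn1 : 1 < n := by omega
  have hcard : 2*k+4 ≤ X.card := hc
  have hXne : X.Nonempty := Finset.card_pos.mp (by omega)
  obtain ⟨u, hu⟩ := hXne
  set E := X.erase u with hE
  have hEcard : E.card = X.card - 1 := Finset.card_erase_of_mem hu
  have hinj : Set.InjOn (fun w => ((w - u : Fin n)).val) E := by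
    intro w1 _ w2 _ he
    have : w1 - u = w2 - u := Fin.ext he
    have := congrArg (· + u) this
    simpa [sub_add_cancel] using this
  set S := E.image (fun w => ((w - u : Fin n)).val) with hS
  have hScard : S.card = E.card := Finset.card_image_of_injOn hinj
  obtain ⟨t, htS, htcard⟩ := pos_lemma (k+1) S (by omega)
  obtain ⟨v, hvE, hvt⟩ := Finset.mem_image.mp htS
  have hvu : v ≠ u := Finset.ne_of_mem_erase hvE
  have hvX : v ∈ X := Finset.mem_of_mem_erase hvE
  have ht0 : t ≠ 0 := by rw [← hvt]; exact sub_val_ne hvu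
  have htn : t < n := by rw [← hvt]; exact (v - u).isLt
  -- card of A
  have hAfilter : S.filter (· < t) = (E.filter (fun w => (w - u).val < t)).image
      (fun w => ((w - u : Fin n)).val) := by
    rw [hS, Finset.filter_image]
  have hAcard : (E.filter (fun w => (w - u).val < t)).card = k+1 := by
    rw [← htcard, hAfilter, Finset.card_image_of_injOn
      (hinj.mono (Finset.filter_subset _ _))]
  -- card of B
  have hsplit1 := Finset.card_filter_add_card_filter_not
    (s := E) (p := fun w => (w - u).val < t)
  have hveq : E.filter (fun w => (w - u).val = t) = {v} := by
    ext w
    simp only [Finset.mem_filter, Finset.mem_singleton]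
    constructor
    · rintro ⟨hwE, hwt⟩
      exact hinj hwE hvE (by show ((w - u : Fin n)).val = ((v - u : Fin n)).val; rw [hwt, hvt])
    · rintro rfl
      exact ⟨hvE, hvt⟩
  have hsplit2 := Finset.card_filter_add_card_filter_not
    (s := E.filter (fun w => ¬ ((w - u).val < t))) (p := fun w => (w - u).val = t)
  have hff1 : (E.filter (fun w => ¬ ((w - u).val < t))).filter (fun w => (w - u).val = t)
      = {v} := by
    rw [Finset.filter_filter]
    rw [← hveq]
    apply Finset.filter_congr
    intro w hw
    constructor
    · rintro ⟨_, h2⟩; exact h2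
    · intro h2; exact ⟨by omega, h2⟩
  have hff2 : (E.filter (fun w => ¬ ((w - u).val < t))).filter (fun w => ¬ ((w - u).val = t))
      = E.filter (fun w => t < (w - u).val) := by
    rw [Finset.filter_filter]
    apply Finset.filter_congr
    intro w hw
    constructor
    · rintro ⟨h1, h2⟩; omega
    · intro h1; constructor <;> omega
  have hBcard : (E.filter (fun w => t < (w - u).val)).card = X.card - k - 3 := by
    rw [hff1, hff2] at hsplit2
    simp only [Finset.card_singleton] at hsplit2
    omega
  -- now apply MutVis
  obtain ⟨p, hpath, hplen, hpcount⟩ := hX u hu v hvX (Ne.symm hvu)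
  rw [cyc_dist hn1] at hplen
  rcases geo_support hn1 p hplen with ⟨he, hs⟩ | ⟨he, hs⟩
  · -- up arc: length = (v - u).val = t
    have hlt : p.length = t := by rw [← he, hvt]
    rw [internalCount_eq p _ p.length hs X, hlt, up_arc_count u X t htn, ← hE, hAcard]
      at hpcount
    omega
  · -- down arc : length = (u - v).val = n - t
    have hnt : (u - v).val = n - t := by
      rcases cd_vals u v with ⟨h1, h2⟩ | ⟨h1, h2⟩
      · rw [hvt] at h2; omega
      · rw [h1, hvt]
    have hlt : p.length = n - t := by omega
    rw [internalCount_eq p _ p.length hs X, hlt, down_arc_count u X t (by omega) htn,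
      ← hE, hBcard] at hpcount
    omega


lemma exists_up_geo [NeZero n] (hn : 1 < n) (u v : Fin n) (hne : v ≠ u)
    (hhalf : 2 * (v - u).val ≤ n) (X : Finset (Fin n)) :
    ∃ p : (SimpleGraph.cycleGraph n).Walk u v,
      p.IsPath ∧ p.length = (SimpleGraph.cycleGraph n).dist u v ∧
      internalCount p X = ((Finset.range ((v - u).val - 1)).filter
        (fun j => u + ((j+1 : ℕ) : Fin n) ∈ X)).card := by
  set t := (v - u).val with htdef
  have ht0 : t ≠ 0 := sub_val_ne hne
  have htn : t < n := (v - u).isLt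
  have e : u + ((t : ℕ) : Fin n) = v := by
    rw [htdef, Fin.cast_val_eq_self]; ring
  refine ⟨(arcW hn u t).copy rfl e, ?_, ?_, ?_⟩
  · rw [SimpleGraph.Walk.isPath_def, SimpleGraph.Walk.support_copy, arcW_support]
    apply List.Nodup.map_on ?_ List.nodup_range
    intro j1 h1 j2 h2 hje
    rw [List.mem_range] at h1 h2
    have v1 : (u + (j1 : Fin n)).val = (u.val + j1) % n := addval u j1
    have v2 : (u + (j2 : Fin n)).val = (u.val + j2) % n := addval u j2
    rw [hje] at v1
    rw [v2] at v1
    have b1 : j1 < n := by omega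
    have b2 : j2 < n := by omega
    rcases Nat.lt_or_ge (u.val + j1) n with c1 | c1 <;>
      rcases Nat.lt_or_ge (u.val + j2) n with c2 | c2
    · rw [Nat.mod_eq_of_lt c2, Nat.mod_eq_of_lt c1] at v1; omega
    · rw [Nat.mod_eq_of_lt c1] at v1
      have : (u.val + j2) % n = u.val + j2 - n := by
        rw [Nat.mod_eq_sub_mod c2, Nat.mod_eq_of_lt (by omega)]
      omega
    · rw [Nat.mod_eq_of_lt c2] at v1
      have : (u.val + j1) % n = u.val + j1 - n := by
        rw [Nat.mod_eq_sub_mod c1, Nat.mod_eq_of_lt (by omega)]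
      omega
    · have d1 : (u.val + j1) % n = u.val + j1 - n := by
        rw [Nat.mod_eq_sub_mod c1, Nat.mod_eq_of_lt (by omega)]
      have d2 : (u.val + j2) % n = u.val + j2 - n := by
        rw [Nat.mod_eq_sub_mod c2, Nat.mod_eq_of_lt (by omega)]
      omega
  · rw [SimpleGraph.Walk.length_copy, arcW_length, cyc_dist hn]
    unfold cd
    rcases cd_vals u v with ⟨h1, h2⟩ | ⟨h1, h2⟩
    · omega
    · rw [h1, ← htdef]; omega
  · exact internalCount_eq ((arcW hn u t).copy rfl e) (fun j : ℕ => u + (j : Fin n)) t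
      (by rw [SimpleGraph.Walk.support_copy, arcW_support]) X

lemma mutvis_univ [NeZero n] (hn3 : 3 ≤ n) (k : ℕ) (hkn : n ≤ 2*k+3) :
    MutVis (SimpleGraph.cycleGraph n) (Finset.univ : Finset (Fin n)) k := by
  have hn1 : 1 < n := by omega
  intro u _ v _ huv
  rcases Nat.lt_or_ge (2 * (v - u).val) (n + 1) with hh | hh
  · obtain ⟨p, h1, h2, h3⟩ := exists_up_geo hn1 u v (Ne.symm huv) (by omega) Finset.univ
    refine ⟨p, h1, h2, ?_⟩
    rw [h3]
    calc _ ≤ (Finset.range ((v - u).val - 1)).card := Finset.card_filter_le _ _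
    _ = (v - u).val - 1 := Finset.card_range _
    _ ≤ k := by
        have := (v-u).isLt
        omega
  · have hd : 2 * (u - v).val ≤ n := by
      rcases cd_vals u v with ⟨h1, h2⟩ | ⟨h1, h2⟩
      · omega
      · omega
    obtain ⟨q, h1, h2, h3⟩ := exists_up_geo hn1 v u huv hd Finset.univ
    refine ⟨q.reverse, h1.reverse, ?_, ?_⟩
    · rw [SimpleGraph.Walk.length_reverse, h2, SimpleGraph.dist_comm]
    · rw [internalCount_reverse, h3]
      calc _ ≤ (Finset.range ((u - v).val - 1)).card := Finset.card_filter_le _ _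
      _ = (u - v).val - 1 := Finset.card_range _
      _ ≤ k := by
          have := (u-v).isLt
          omega


/-- The extremal construction: two antipodal blocks of `k+2` and `k+1` consecutive vertices. -/
def blockSet (n k : ℕ) [NeZero n] : Finset (Fin n) :=
  ((Finset.range (k+2)) ∪ (Finset.Icc (k+2+(n-(2*k+3)+1)/2) ((k+2+(n-(2*k+3)+1)/2)+k))).image
    (fun i : ℕ => (i : Fin n))

lemma blockSet_mem [NeZero n] (k : ℕ) (hnk : 2*k+4 ≤ n) (w : Fin n) :
    w ∈ blockSet n k ↔ w.val ≤ k+1 ∨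
      (k+2+(n-(2*k+3)+1)/2 ≤ w.val ∧ w.val ≤ (k+2+(n-(2*k+3)+1)/2)+k) := by
  set s := k+2+(n-(2*k+3)+1)/2 with hs
  have hsk : s + k < n := by rw [hs]; omega
  unfold blockSet
  rw [← hs]
  simp only [Finset.mem_image, Finset.mem_union, Finset.mem_range, Finset.mem_Icc]
  constructor
  · rintro ⟨i, hi, rfl⟩
    have hin : i < n := by omega
    rw [Fin.val_natCast, Nat.mod_eq_of_lt hin]
    omega
  · intro h
    refine ⟨w.val, ?_, Fin.cast_val_eq_self w⟩
    omega

lemma blockSet_card [NeZero n] (k : ℕ) (hnk : 2*k+4 ≤ n) :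
    (blockSet n k).card = 2*k+3 := by
  set s := k+2+(n-(2*k+3)+1)/2 with hs
  have hsk : s + k < n := by rw [hs]; omega
  unfold blockSet
  rw [← hs]
  rw [Finset.card_image_of_injOn]
  · rw [Finset.card_union_of_disjoint]
    · rw [Finset.card_range, Nat.card_Icc]
      omega
    · rw [Finset.disjoint_left]
      intro a ha hb
      rw [Finset.mem_range] at ha
      rw [Finset.mem_Icc] at hb
      omega
  · intro a ha b hb he
    simp only [Finset.coe_union, Set.mem_union, Finset.mem_coe, Finset.mem_range,
      Finset.mem_Icc] at ha hb
    have han : a < n := by omega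
    have hbn : b < n := by omega
    have he' : ((a : Fin n)) = ((b : Fin n)) := he
    have : ((a : Fin n)).val = ((b : Fin n)).val := congrArg Fin.val he'
    rw [Fin.val_natCast, Fin.val_natCast, Nat.mod_eq_of_lt han, Nat.mod_eq_of_lt hbn] at this
    exact this

lemma blockSet_key [NeZero n] (k : ℕ) (hnk : 2*k+4 ≤ n) (u v : Fin n)
    (hu : u ∈ blockSet n k) (hv : v ∈ blockSet n k) (hlt : u.val < v.val) :
    ∃ p : (SimpleGraph.cycleGraph n).Walk u v,
      p.IsPath ∧ p.length = (SimpleGraph.cycleGraph n).dist u v ∧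
      internalCount p (blockSet n k) ≤ k := by
  have hn1 : 1 < n := by omega
  set s := k+2+(n-(2*k+3)+1)/2 with hs
  have hg1 : (n-(2*k+3)+1)/2 ≤ n-(2*k+3) := by omega
  have hg2 : n-(2*k+3) ≤ 2*((n-(2*k+3)+1)/2) + 1 := by omega
  have hsk : s + k < n := by omega
  rw [blockSet_mem k hnk] at hu hv
  rw [← hs] at hu hv
  set pu := u.val with hpu
  set pv := v.val with hpv
  have hvu_pos : pv - pu ≠ 0 := by omega
  have hpvn : pv < n := v.isLt
  have hpun : pu < n := u.isLt
  have hvusub : (v - u).val = pv - pu := by rw [subval]; split_ifs <;> omega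
  have huvsub : (u - v).val = pu + n - pv := by
    rw [subval]
    have : ¬ (pv ≤ pu) := by omega
    split_ifs <;> omega
  have hne : v ≠ u := by
    intro he
    have := congrArg Fin.val he
    omega
  -- the "cross" case determination
  by_cases hcross : pu ≤ k+1 ∧ s ≤ pv
  · -- cross pair
    set α := (k+1-pu) + (pv-s) with hα
    by_cases hα1 : α ≤ k
    · -- go up
      have hhalf : 2 * (v - u).val ≤ n := by rw [hvusub]; omega
      obtain ⟨p, h1, h2, h3⟩ := exists_up_geo hn1 u v hne hhalf (blockSet n k)
      refine ⟨p, h1, h2, ?_⟩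
      rw [h3, hvusub]
      have hsub : (Finset.range (pv - pu - 1)).filter
          (fun j => u + ((j+1 : ℕ) : Fin n) ∈ blockSet n k)
          ⊆ (Finset.range (k+1-pu)) ∪ (Finset.Ico (s-pu-1) (pv-pu-1)) := by
        intro j hj
        simp only [Finset.mem_filter, Finset.mem_range] at hj
        obtain ⟨hjr, hjX⟩ := hj
        rw [blockSet_mem k hnk, ← hs] at hjX
        have hval : (u + ((j+1 : ℕ) : Fin n)).val = pu + (j+1) := by
          rw [addval, Nat.mod_eq_of_lt (by omega)]
        rw [hval] at hjX
        simp only [Finset.mem_union, Finset.mem_range, Finset.mem_Ico]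
        omega
      calc _ ≤ _ := Finset.card_le_card hsub
      _ ≤ (Finset.range (k+1-pu)).card + (Finset.Ico (s-pu-1) (pv-pu-1)).card :=
          Finset.card_union_le _ _
      _ ≤ k := by rw [Finset.card_range, Nat.card_Ico]; omega
    · -- go down (reverse of up from v)
      have hhalf : 2 * (u - v).val ≤ n := by rw [huvsub]; omega
      obtain ⟨q, h1, h2, h3⟩ := exists_up_geo hn1 v u (Ne.symm hne) hhalf (blockSet n k)
      refine ⟨q.reverse, h1.reverse, ?_, ?_⟩
      · rw [SimpleGraph.Walk.length_reverse, h2, SimpleGraph.dist_comm]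
      · rw [internalCount_reverse, h3, huvsub]
        have hsub : (Finset.range (pu + n - pv - 1)).filter
            (fun j => v + ((j+1 : ℕ) : Fin n) ∈ blockSet n k)
            ⊆ (Finset.range (s+k-pv)) ∪ (Finset.Ico (n-pv-1) (pu+n-pv-1)) := by
          intro j hj
          simp only [Finset.mem_filter, Finset.mem_range] at hj
          obtain ⟨hjr, hjX⟩ := hj
          rw [blockSet_mem k hnk, ← hs] at hjX
          have hval : (v + ((j+1 : ℕ) : Fin n)).val = (pv + (j+1)) % n := addval v (j+1)
          rw [hval] at hjX
          simp only [Finset.mem_union, Finset.mem_range, Finset.mem_Ico]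
          rcases Nat.lt_or_ge (pv + (j+1)) n with hc | hc
          · rw [Nat.mod_eq_of_lt hc] at hjX
            left
            omega
          · right
            omega
        calc _ ≤ _ := Finset.card_le_card hsub
        _ ≤ (Finset.range (s+k-pv)).card + (Finset.Ico (n-pv-1) (pu+n-pv-1)).card :=
            Finset.card_union_le _ _
        _ ≤ k := by rw [Finset.card_range, Nat.card_Ico]; omega
  · -- same-block pair: go up, the arc is short and its interior has ≤ k vertices anyway
    have hshort : pv - pu ≤ k + 1 := by omega
    have hhalf : 2 * (v - u).val ≤ n := by rw [hvusub]; omega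
    obtain ⟨p, h1, h2, h3⟩ := exists_up_geo hn1 u v hne hhalf (blockSet n k)
    refine ⟨p, h1, h2, ?_⟩
    rw [h3, hvusub]
    calc _ ≤ (Finset.range (pv - pu - 1)).card := Finset.card_filter_le _ _
    _ ≤ k := by rw [Finset.card_range]; omega

lemma blockSet_mutvis [NeZero n] (k : ℕ) (hnk : 2*k+4 ≤ n) :
    MutVis (SimpleGraph.cycleGraph n) (blockSet n k) k := by
  intro u hu v hv hne
  rcases Nat.lt_or_ge u.val v.val with h | h
  · exact blockSet_key k hnk u v hu hv h
  · have h' : v.val < u.val := by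
      rcases Nat.lt_or_ge v.val u.val with h2 | h2
      · exact h2
      · exact absurd (Fin.ext (by omega)) hne
    obtain ⟨q, h1, h2, h3⟩ := blockSet_key k hnk v u hv hu h'
    exact ⟨q.reverse, h1.reverse,
      by rw [SimpleGraph.Walk.length_reverse, h2, SimpleGraph.dist_comm],
      by rw [internalCount_reverse]; exact h3⟩

end CycleLemmas

set_option maxHeartbeats 1000000 in
theorem stmt12 (n k : ℕ) (hn : 3 ≤ n) (hk : k ≤ n - 2) :
    muK (SimpleGraph.cycleGraph n) k = min n (2 * k + 3) := by
  haveI : NeZero n := ⟨by omega⟩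
  have hub : ∀ m ∈ {m | ∃ X : Finset (Fin n),
      MutVis (SimpleGraph.cycleGraph n) X k ∧ X.card = m}, m ≤ min n (2*k+3) := by
    rintro m ⟨X, hX, rfl⟩
    refine le_min ?_ (card_le_upper hn k X hX)
    calc X.card ≤ (Finset.univ : Finset (Fin n)).card := Finset.card_le_univ X
    _ = n := by rw [Finset.card_univ, Fintype.card_fin]
  have hmem : min n (2*k+3) ∈ {m | ∃ X : Finset (Fin n),
      MutVis (SimpleGraph.cycleGraph n) X k ∧ X.card = m} := by
    by_cases hc : n ≤ 2*k+3
    · rw [min_eq_left hc]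
      exact ⟨Finset.univ, mutvis_univ hn k hc,
        by rw [Finset.card_univ]; exact Fintype.card_fin n⟩
    · push_neg at hc
      rw [min_eq_right (by omega)]
      exact ⟨blockSet n k, blockSet_mutvis k (by omega), blockSet_card k (by omega)⟩
  unfold muK
  apply le_antisymm
  · exact csSup_le ⟨_, hmem⟩ hub
  · exact le_csSup ⟨min n (2*k+3), hub⟩ hmem
end

section
/- For every connected graph G of order n and every k ≥ 0, τ_k(G) ≤ ⌈n/(k+2)⌉, where τ_k(G) is the mutual k-visibility covering number. -/
open scoped Classical

variable {V : Type*}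

/-- The mutual `k`-visibility covering number: the minimum number of parts in a
partition of `V(G)` into mutual `k`-visible sets. -/
noncomputable def tauK [Fintype V] (G : SimpleGraph V) (k : ℕ) : ℕ :=
  sInf {n | ∃ P : Finpartition (Finset.univ : Finset V),
    (∀ X ∈ P.parts, MutVis G X k) ∧ P.parts.card = n}

lemma mutvis_of_card_le {G : SimpleGraph V} (hG : G.Connected) {k : ℕ} {X : Finset V}
    (hX : X.card ≤ k + 2) : MutVis G X k := by
  intro u hu v hv huv
  obtain ⟨p, hp, hlen⟩ := hG.exists_path_of_dist u v
  refine ⟨p, hp, hlen, ?_⟩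
  have hnd : p.support.Nodup := hp.support_nodup
  have hsupp : p.support = u :: p.support.tail := p.support_eq_cons
  have htnd : p.support.tail.Nodup := by
    rw [hsupp] at hnd; exact hnd.of_cons
  have hunotin : u ∉ p.support.tail := by
    rw [hsupp] at hnd; exact (List.nodup_cons.mp hnd).1
  set l := p.support.tail.dropLast with hl
  have hsub : l.Sublist p.support.tail := List.dropLast_sublist _
  have hlnd : l.Nodup := hsub.nodup htnd
  have hul : u ∉ l := fun h => hunotin (hsub.mem h)
  have htne : p.support.tail ≠ [] := by
    intro h
    have := p.end_mem_support
    rw [hsupp, h] at this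
    simp at this
    exact huv this.symm
  have hglast : p.support.tail.getLast? = some v := by
    have h1 : p.support.getLast? = some v := by
      rw [List.getLast?_eq_getLast (l := p.support) (by simp), p.getLast_support]
    obtain ⟨c, t, ht⟩ := List.exists_cons_of_ne_nil htne
    rw [hsupp, ht] at h1
    rw [ht]
    rwa [List.getLast?_cons_cons] at h1
  have hvl : v ∉ l := by
    have heq : l ++ [v] = p.support.tail :=
      List.dropLast_append_getLast? v hglast
    have hndapp : (l ++ [v]).Nodup := by rw [heq]; exact htnd
    exact fun h => (List.disjoint_of_nodup_append hndapp) h (List.mem_singleton_self v)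
  have hcount : internalCount p X = (l.filter (fun x => decide (x ∈ X))).length := by
    rw [internalCount, List.countP_eq_length_filter]
  have hfnd : (l.filter (fun x => decide (x ∈ X))).Nodup := hlnd.filter _
  have hsubX : (l.filter (fun x => decide (x ∈ X))).toFinset ⊆ (X.erase v).erase u := by
    intro x hx
    rw [List.mem_toFinset, List.mem_filter] at hx
    obtain ⟨hxl, hxX⟩ := hx
    simp only [decide_eq_true_eq] at hxX
    refine Finset.mem_erase.mpr ⟨fun h => hul (h ▸ hxl), Finset.mem_erase.mpr
      ⟨fun h => hvl (h ▸ hxl), hxX⟩⟩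
  have hcard2 : ((X.erase v).erase u).card ≤ k := by
    have h1 : (X.erase v).card = X.card - 1 := Finset.card_erase_of_mem hv
    have h2 : ((X.erase v).erase u).card = (X.erase v).card - 1 :=
      Finset.card_erase_of_mem (Finset.mem_erase.mpr ⟨huv, hu⟩)
    omega
  calc internalCount p X = (l.filter (fun x => decide (x ∈ X))).toFinset.card := by
        rw [hcount, List.toFinset_card_of_nodup hfnd]
    _ ≤ ((X.erase v).erase u).card := Finset.card_le_card hsubX
    _ ≤ k := hcard2
theorem stmt14 [Fintype V] (G : SimpleGraph V) (hG : G.Connected) (k : ℕ) :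
    tauK G k ≤ (Fintype.card V + k + 1) / (k + 2) := by
  unfold tauK
  classical
  set n := Fintype.card V with hn
  set m := (n + k + 1) / (k + 2) with hm
  obtain e := Fintype.equivFin V
  set f : V → ℕ := fun v => (e v : ℕ) / (k + 2) with hf
  have hfv : ∀ v, f v < m := by
    intro v
    have hn1 : 0 < n := Fintype.card_pos_iff.mpr ⟨v⟩
    have h1 : (e v : ℕ) ≤ n - 1 := by have := (e v).2; omega
    have h2 : (n - 1) + (k + 2) = n + k + 1 := by omega
    have h3 : m = (n - 1) / (k + 2) + 1 := by
      rw [hm, ← h2, Nat.add_div_right _ (show 0 < k + 2 by omega)]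
    have h4 : (e v : ℕ) / (k + 2) ≤ (n - 1) / (k + 2) := Nat.div_le_div_right h1
    simp only [hf]
    omega
  set parts : Finset (Finset V) := (Finset.univ.image f).image
      (fun i => Finset.univ.filter (fun v => f v = i)) with hparts
  have hmemparts : ∀ P ∈ parts, ∃ i ∈ Finset.univ.image f,
      P = Finset.univ.filter (fun v => f v = i) := by
    intro P hP
    rw [hparts, Finset.mem_image] at hP
    obtain ⟨i, hi, hPi⟩ := hP
    exact ⟨i, hi, hPi.symm⟩
  have hfibcard : ∀ i : ℕ, (Finset.univ.filter (fun v => f v = i)).card ≤ k + 2 := by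
    intro i
    have := Finset.card_le_card_of_injOn (fun v => (e v : ℕ))
      (s := Finset.univ.filter (fun v => f v = i))
      (t := Finset.Ico (i * (k + 2)) (i * (k + 2) + (k + 2)))
      (by
        intro v hv
        rw [Finset.mem_coe, Finset.mem_filter] at hv
        have h1 := Nat.div_add_mod (e v : ℕ) (k + 2)
        have h2 := Nat.mod_lt (e v : ℕ) (show 0 < k + 2 by omega)
        have h3 : (e v : ℕ) / (k + 2) = i := hv.2
        rw [h3] at h1
        simp only [Finset.mem_coe, Finset.mem_Ico, mul_comm i (k + 2)]
        set q := (k + 2) * i with hq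
        omega)
      (by
        intro v _ w _ h
        exact e.injective (Fin.val_injective h))
    simpa using this
  set P : Finpartition (Finset.univ : Finset V) :=
    { parts := parts
      supIndep := by
        rw [Finset.supIndep_iff_pairwiseDisjoint]
        intro a ha b hb hab
        obtain ⟨i, _, hai⟩ := hmemparts a ha
        obtain ⟨j, _, hbj⟩ := hmemparts b hb
        have hij : i ≠ j := fun h => hab (by rw [hai, hbj, h])
        rw [Function.onFun, hai, hbj, Finset.disjoint_left]
        intro x hx hx'
        simp only [id_eq, Finset.mem_filter] at hx hx'
        exact hij (hx.2 ▸ hx'.2 ▸ rfl)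
      sup_parts := by
        apply Finset.Subset.antisymm
        · intro x _; exact Finset.mem_univ x
        · intro x _
          rw [Finset.mem_sup]
          refine ⟨Finset.univ.filter (fun v => f v = f x), ?_, ?_⟩
          · rw [hparts, Finset.mem_image]
            exact ⟨f x, Finset.mem_image_of_mem f (Finset.mem_univ x), rfl⟩
          · simp
      bot_notMem := by
        intro h
        obtain ⟨i, hi, hPi⟩ := hmemparts ⊥ h
        rw [Finset.mem_image] at hi
        obtain ⟨w, _, hw⟩ := hi
        have : w ∈ Finset.univ.filter (fun v => f v = i) := by
          rw [Finset.mem_filter]; exact ⟨Finset.mem_univ w, hw⟩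
        rw [← hPi] at this
        simp at this } with hP
  have hPcard : P.parts.card ≤ m := by
    calc P.parts.card ≤ (Finset.univ.image f).card := Finset.card_image_le
      _ ≤ (Finset.range m).card := Finset.card_le_card (by
          intro i hi
          rw [Finset.mem_image] at hi
          obtain ⟨v, _, hv⟩ := hi
          rw [Finset.mem_range]
          exact hv ▸ hfv v)
      _ = m := Finset.card_range m
  have hmemS : P.parts.card ∈ {n | ∃ P : Finpartition (Finset.univ : Finset V),
      (∀ X ∈ P.parts, MutVis G X k) ∧ P.parts.card = n} := by
    refine ⟨P, ?_, rfl⟩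
    intro X hX
    obtain ⟨i, _, hXi⟩ := hmemparts X hX
    exact mutvis_of_card_le hG (hXi ▸ hfibcard i)
  exact le_trans (Nat.sInf_le hmemS) hPcard
end

section
/- For every connected graph G of order n and every k ≥ 0, ⌈n/μ_k(G)⌉ ≤ τ_k(G) ≤ 1 + ⌈(n − μ_k(G))/(k+2)⌉. -/
open scoped Classical

variable {V : Type*}

lemma small_mutvis [Fintype V] {G : SimpleGraph V} (hG : G.Connected) (k : ℕ)
    (X : Finset V) (hX : X.card ≤ k + 2) : MutVis G X k := by
  intro u hu v hv huv
  obtain ⟨p, hp, hlen⟩ := hG.exists_path_of_dist u v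
  refine ⟨p, hp, hlen, ?_⟩
  have hnd : p.support.Nodup := hp.support_nodup
  have htail : p.support.tail.Nodup := hnd.sublist (List.tail_sublist _)
  have hsubl : p.support.tail.dropLast.Sublist p.support.tail := List.dropLast_sublist _
  have hlnd : p.support.tail.dropLast.Nodup := htail.sublist hsubl
  have hlp : p.length ≠ 0 := fun h => huv (SimpleGraph.Walk.eq_of_length_eq_zero h)
  have htne : p.support.tail ≠ [] := by
    intro h
    have h1 : p.support.tail.length = p.length := by
      rw [List.length_tail, p.length_support]; omega
    rw [h] at h1
    exact hlp h1.symm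
  have hu' : u ∉ p.support.tail := by
    have := p.support_eq_cons ▸ hnd
    exact (List.nodup_cons.mp this).1
  have hgl : p.support.tail.getLast htne = v := by
    rw [List.getLast_tail]
    exact p.getLast_support
  have hvd : v ∉ p.support.tail.dropLast := by
    intro hmem
    have h2 := List.dropLast_append_getLast htne
    rw [hgl] at h2
    have h3 := htail
    rw [← h2] at h3
    rcases List.nodup_append'.mp h3 with ⟨_, _, hdisj⟩
    exact hdisj hmem (by simp)
  unfold internalCount
  rw [List.countP_eq_length_filter]
  set f := p.support.tail.dropLast.filter (fun x => decide (x ∈ X)) with hf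
  have hfnd : f.Nodup := hlnd.filter _
  have hsub2 : f.toFinset ⊆ (X.erase v).erase u := by
    intro x hx
    rw [List.mem_toFinset] at hx
    have hxl := List.mem_of_mem_filter hx
    have hxX : x ∈ X := by simpa using List.of_mem_filter hx
    have hxu : x ≠ u := by rintro rfl; exact hu' (hsubl.subset hxl)
    have hxv : x ≠ v := by rintro rfl; exact hvd hxl
    simp [Finset.mem_erase, hxu, hxv, hxX]
  have hc := Finset.card_le_card hsub2
  rw [List.toFinset_card_of_nodup hfnd] at hc
  have h2 : ((X.erase v).erase u).card = X.card - 2 := by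
    rw [Finset.card_erase_of_mem (Finset.mem_erase.mpr ⟨huv, hu⟩),
      Finset.card_erase_of_mem hv]
    omega
  omega

theorem stmt16 [Fintype V] (G : SimpleGraph V) (hG : G.Connected) (k : ℕ) :
    (Fintype.card V + muK G k - 1) / muK G k ≤ tauK G k ∧
    tauK G k ≤ 1 + (Fintype.card V - muK G k + k + 1) / (k + 2) := by
  classical
  set S := {n | ∃ X : Finset V, MutVis G X k ∧ X.card = n} with hS
  have hbdd : BddAbove S := by
    refine ⟨Fintype.card V, ?_⟩
    rintro n ⟨X, _, rfl⟩
    exact X.card_le_univ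
  have hne : S.Nonempty := ⟨0, ∅, by intro u hu; simp at hu, rfl⟩
  have hmem : muK G k ∈ S := Nat.sSup_mem hne hbdd
  obtain ⟨X, hXvis, hXcard⟩ := hmem
  have hmu1 : 1 ≤ muK G k := by
    obtain ⟨v⟩ := hG.nonempty
    have h1 : (1 : ℕ) ∈ S := by
      refine ⟨{v}, ?_, Finset.card_singleton v⟩
      intro a ha b hb hab
      rw [Finset.mem_singleton] at ha hb
      exact absurd (ha.trans hb.symm) hab
    exact le_csSup hbdd h1
  set n := Fintype.card V with hn
  set μ := muK G k with hμ
  set c := (n - μ + k + 1) / (k + 2) with hc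
  -- construct the partition
  set l := (Finset.univ \ X).toList with hl
  set g : V → ℕ := fun v => if v ∈ X then 0 else l.idxOf v / (k + 2) + 1 with hg
  have hmeml : ∀ v : V, v ∉ X → v ∈ l := by
    intro v hv
    rw [hl, Finset.mem_toList]
    simp [hv]
  have hllen : l.length = n - μ := by
    rw [hl, Finset.length_toList, Finset.card_sdiff_of_subset (Finset.subset_univ X),
      Finset.card_univ, hXcard]
  have hfib0 : Finset.univ.filter (fun v => g v = 0) = X := by
    ext x
    simp only [Finset.mem_filter, Finset.mem_univ, true_and, hg]
    split <;> simp_all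
  have hfibS : ∀ j : ℕ, MutVis G (Finset.univ.filter (fun v => g v = j + 1)) k := by
    intro j
    apply small_mutvis hG
    have : (Finset.univ.filter (fun v => g v = j + 1)).card ≤
        (Finset.Ico (j * (k + 2)) (j * (k + 2) + (k + 2))).card := by
      apply Finset.card_le_card_of_injOn (fun v => l.idxOf v)
      · intro v hv
        simp only [Finset.mem_coe, Finset.mem_filter, hg] at hv
        have hvX : v ∉ X := by
          by_contra h
          simp [h] at hv
        have hdiv : l.idxOf v / (k + 2) = j := by
          have := hv.2
          simp [hvX] at this
          omega
        have h1 : j * (k + 2) ≤ l.idxOf v := by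
          rw [← hdiv]; exact Nat.div_mul_le_self _ _
        have h2 : l.idxOf v < j * (k + 2) + (k + 2) := by
          have h3 : l.idxOf v / (k + 2) < j + 1 := by omega
          have h4 := (Nat.div_lt_iff_lt_mul (show 0 < k + 2 by omega)).mp h3
          calc l.idxOf v < (j + 1) * (k + 2) := h4
            _ = j * (k + 2) + (k + 2) := by ring
        exact Finset.mem_Ico.mpr ⟨h1, h2⟩
      · intro a ha b hb hab
        simp only [Finset.mem_coe, Finset.mem_filter, hg] at ha hb
        have haX : a ∉ X := by by_contra h; simp [h] at ha
        have hbX : b ∉ X := by by_contra h; simp [h] at hb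
        exact (List.idxOf_inj (hmeml a haX)).mp hab
    rw [Nat.card_Ico] at this
    omega
  set parts : Finset (Finset V) :=
    (Finset.univ.image g).image (fun j => Finset.univ.filter (fun v => g v = j))
    with hparts
  have hmemparts : ∀ x : V, Finset.univ.filter (fun v => g v = g x) ∈ parts := by
    intro x
    exact Finset.mem_image_of_mem _ (Finset.mem_image_of_mem g (Finset.mem_univ x))
  have hsi : parts.SupIndep id := by
    rw [Finset.supIndep_iff_pairwiseDisjoint]
    intro a ha b hb hab
    simp only [hparts, Finset.mem_coe, Finset.mem_image] at ha hb
    obtain ⟨j1, _, rfl⟩ := ha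
    obtain ⟨j2, _, rfl⟩ := hb
    have hj : j1 ≠ j2 := fun h => hab (by rw [h])
    refine Finset.disjoint_left.mpr ?_
    intro x hx hx2
    simp only [id_eq, Finset.mem_filter] at hx hx2
    exact hj (hx.2.symm.trans hx2.2)
  have hsup : parts.sup id = Finset.univ := by
    apply le_antisymm
    · exact Finset.sup_le fun b _ => Finset.le_iff_subset.mpr (Finset.subset_univ b)
    · intro x _
      rw [Finset.mem_sup]
      exact ⟨_, hmemparts x, by simp⟩
  have hbot : ⊥ ∉ parts := by
    intro h
    simp only [hparts, Finset.mem_image, Finset.mem_univ, true_and] at h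
    obtain ⟨j, ⟨w, rfl⟩, hjeq⟩ := h
    have : w ∈ Finset.univ.filter (fun v => g v = g w) := by simp
    rw [hjeq] at this
    simp at this
  set P : Finpartition (Finset.univ : Finset V) := ⟨parts, hsi, hsup, hbot⟩ with hP
  have hPvis : ∀ Y ∈ P.parts, MutVis G Y k := by
    intro Y hY
    simp only [hP, hparts, Finset.mem_image] at hY
    obtain ⟨j, _, rfl⟩ := hY
    cases j with
    | zero => rw [hfib0]; exact hXvis
    | succ j => exact hfibS j
  have hcardP : P.parts.card ≤ 1 + c := by
    have h1 : P.parts.card ≤ (Finset.univ.image g).card := Finset.card_image_le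
    have h2 : Finset.univ.image g ⊆ Finset.range (c + 1) := by
      intro j hj
      rw [Finset.mem_image] at hj
      obtain ⟨v, _, rfl⟩ := hj
      rw [Finset.mem_range]
      by_cases hvX : v ∈ X
      · simp [hg, hvX]
      · have hvl := hmeml v hvX
        have hidx : l.idxOf v < n - μ := by
          rw [← hllen]; exact List.idxOf_lt_length_iff.mpr hvl
        have hnμ : 1 ≤ n - μ := by omega
        have hd : l.idxOf v / (k + 2) ≤ (n - μ - 1) / (k + 2) :=
          Nat.div_le_div_right (by omega)
        have heq : (n - μ - 1) / (k + 2) + 1 = c := by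
          rw [hc]
          have : n - μ + k + 1 = (n - μ - 1) + (k + 2) := by omega
          rw [this, Nat.add_div_right _ (show 0 < k + 2 by omega)]
        simp only [hg, hvX, if_neg hvX]
        omega
    have h3 := Finset.card_le_card h2
    rw [Finset.card_range] at h3
    omega
  have hupper : tauK G k ≤ 1 + c := by
    have : tauK G k ≤ P.parts.card := Nat.sInf_le ⟨P, hPvis, rfl⟩
    omega
  refine ⟨?_, hupper⟩
  -- lower bound
  have hTne : tauK G k ∈ {m | ∃ Q : Finpartition (Finset.univ : Finset V),
      (∀ Y ∈ Q.parts, MutVis G Y k) ∧ Q.parts.card = m} :=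
    Nat.sInf_mem ⟨P.parts.card, P, hPvis, rfl⟩
  obtain ⟨Q, hQvis, hQcard⟩ := hTne
  have hsum : ∑ Y ∈ Q.parts, Y.card = n := by
    rw [Q.sum_card_parts, Finset.card_univ]
  have hle : ∀ Y ∈ Q.parts, Y.card ≤ μ := by
    intro Y hY
    exact le_csSup hbdd ⟨Y, hQvis Y hY, rfl⟩
  have hnle : n ≤ tauK G k * μ := by
    rw [← hsum, ← hQcard]
    exact Finset.sum_le_card_nsmul _ _ _ hle
  have : n + μ - 1 < (tauK G k + 1) * μ := by
    rw [add_mul, one_mul]; omega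
  exact Nat.lt_succ_iff.mp ((Nat.div_lt_iff_lt_mul (by omega)).mpr this)
end

section
/- For the path P_n on n ≥ 1 vertices and any k ≥ 0, τ_k(P_n) = ⌈n/(k+2)⌉. -/
open scoped Classical

variable {V : Type*}

lemma path_ivt {n : ℕ} {u v : Fin n} (p : (SimpleGraph.pathGraph n).Walk u v)
    (m : ℕ) (h1 : u.val ≤ m) (h2 : m ≤ v.val) : ∃ w ∈ p.support, w.val = m := by
  induction p with
  | nil => rename_i w; exact ⟨w, by simp, by omega⟩
  | @cons a b c h q ih =>
    rw [SimpleGraph.pathGraph_adj] at h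
    rcases h with h | h
    · rcases eq_or_lt_of_le h1 with h0 | h0
      · exact ⟨a, by simp, by omega⟩
      · obtain ⟨w, hw, hw2⟩ := ih (by omega) h2
        exact ⟨w, by simp [hw], hw2⟩
    · obtain ⟨w, hw, hw2⟩ := ih (by omega) h2
      exact ⟨w, by simp [hw], hw2⟩

lemma tail_getLast {G : SimpleGraph V} {u v : V} (p : G.Walk u v)
    (hne : p.support.tail ≠ []) : p.support.tail.getLast hne = v := by
  rw [List.getLast_tail]
  exact p.getLast_support

lemma mem_internal {G : SimpleGraph V} {u v x : V} (p : G.Walk u v)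
    (hx : x ∈ p.support) (hxu : x ≠ u) (hxv : x ≠ v) :
    x ∈ p.support.tail.dropLast := by
  rw [p.support_eq_cons] at hx
  rcases hx with _ | hx
  · exact absurd rfl hxu
  · rename_i hx
    have hne : p.support.tail ≠ [] := List.ne_nil_of_mem hx
    rw [← List.dropLast_append_getLast hne] at hx
    rcases List.mem_append.1 hx with h | h
    · exact h
    · exact absurd ((List.mem_singleton.1 h).trans (tail_getLast p hne)) hxv

lemma tail_nodup {G : SimpleGraph V} {u v : V} {p : G.Walk u v} (hp : p.IsPath) :
    u ∉ p.support.tail ∧ p.support.tail.Nodup := by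
  have hnd := hp.support_nodup
  rw [p.support_eq_cons, List.nodup_cons] at hnd
  exact hnd

lemma internal_nodup {G : SimpleGraph V} {u v : V} {p : G.Walk u v} (hp : p.IsPath) :
    p.support.tail.dropLast.Nodup :=
  (tail_nodup hp).2.sublist (List.dropLast_sublist _)

lemma not_mem_internal {G : SimpleGraph V} {u v : V} {p : G.Walk u v} (hp : p.IsPath) :
    u ∉ p.support.tail.dropLast ∧ v ∉ p.support.tail.dropLast := by
  obtain ⟨h1, h2⟩ := tail_nodup hp
  constructor
  · exact fun h => h1 ((List.dropLast_sublist _).mem h)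
  · intro h
    have hne : p.support.tail ≠ [] :=
      List.ne_nil_of_mem ((List.dropLast_sublist _).mem h)
    have heq := List.dropLast_append_getLast hne
    rw [tail_getLast p hne] at heq
    have h3 : (p.support.tail.dropLast ++ [v]).Nodup := by rw [heq]; exact h2
    rw [List.nodup_append] at h3
    exact h3.2.2 v h v (by simp) rfl

lemma card_le_filter_length {α : Type*} [DecidableEq α] (l : List α) (p : α → Bool)
    (S : Finset α) (hS : ∀ x ∈ S, x ∈ l ∧ p x = true) :
    S.card ≤ (l.filter p).length := by
  have hsub : S ⊆ (l.filter p).toFinset := fun x hx =>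
    List.mem_toFinset.2 (List.mem_filter.2 ⟨(hS x hx).1, (hS x hx).2⟩)
  exact (Finset.card_le_card hsub).trans (List.toFinset_card_le _)

lemma filter_length_le_card {α : Type*} [DecidableEq α] {l : List α} (hl : l.Nodup)
    (p : α → Bool) (S : Finset α) (hS : ∀ x ∈ l, p x = true → x ∈ S) :
    (l.filter p).length ≤ S.card := by
  have hnd : (l.filter p).Nodup := hl.filter _
  rw [← List.toFinset_card_of_nodup hnd]
  apply Finset.card_le_card
  intro x hx
  rw [List.mem_toFinset, List.mem_filter] at hx
  exact hS x hx.1 hx.2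

lemma internalCount_le {G : SimpleGraph V} {u v : V} {p : G.Walk u v} (hp : p.IsPath)
    (X : Finset V) (hu : u ∈ X) (hv : v ∈ X) (huv : u ≠ v) :
    internalCount p X ≤ X.card - 2 := by
  classical
  rw [internalCount, List.countP_eq_length_filter]
  have h1 : _ ≤ ((X.erase v).erase u).card :=
    filter_length_le_card (internal_nodup hp) _ ((X.erase v).erase u) (by
      intro x hxl hpx
      have hxX : x ∈ X := of_decide_eq_true hpx
      have hni := not_mem_internal hp
      refine Finset.mem_erase.2 ⟨?_, Finset.mem_erase.2 ⟨?_, hxX⟩⟩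
      · rintro rfl; exact hni.1 hxl
      · rintro rfl; exact hni.2 hxl)
  have h2 : ((X.erase v).erase u).card = X.card - 1 - 1 := by
    rw [Finset.card_erase_of_mem (Finset.mem_erase.2 ⟨huv, hu⟩),
      Finset.card_erase_of_mem hv]
  omega

lemma internalCount_ge {n : ℕ} {X : Finset (Fin n)} (hX : X.Nonempty)
    (p : (SimpleGraph.pathGraph n).Walk (X.min' hX) (X.max' hX)) :
    X.card - 2 ≤ internalCount p X := by
  classical
  rw [internalCount, List.countP_eq_length_filter]
  refine le_trans ?_
    (card_le_filter_length _ _ ((X.erase (X.max' hX)).erase (X.min' hX)) ?_)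
  · have h4 := Finset.pred_card_le_card_erase (s := X.erase (X.max' hX)) (a := X.min' hX)
    have h5 := Finset.pred_card_le_card_erase (s := X) (a := X.max' hX)
    omega
  · intro x hx
    rw [Finset.mem_erase, Finset.mem_erase] at hx
    obtain ⟨hxu, hxv, hxX⟩ := hx
    obtain ⟨w, hw, hwv⟩ := path_ivt p x.val (X.min'_le _ hxX) (X.le_max' _ hxX)
    have hwx : w = x := Fin.ext hwv
    subst hwx
    exact ⟨mem_internal p hw hxu hxv, by simpa using hxX⟩

lemma mutVis_pathGraph_iff {n k : ℕ} (X : Finset (Fin n)) :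
    MutVis (SimpleGraph.pathGraph n) X k ↔ X.card ≤ k + 2 := by
  constructor
  · intro h
    by_contra hc
    push_neg at hc
    have hX : X.Nonempty := Finset.card_pos.1 (by omega)
    have hlt : X.min' hX < X.max' hX := X.min'_lt_max'_of_card (by omega)
    obtain ⟨p, hpath, hlen, hcount⟩ :=
      h _ (X.min'_mem hX) _ (X.max'_mem hX) (ne_of_lt hlt)
    have := internalCount_ge hX p
    omega
  · intro hcard u hu v hv huv
    have hreach : (SimpleGraph.pathGraph n).Reachable u v :=
      SimpleGraph.pathGraph_preconnected n u v
    obtain ⟨p, hpath, hlen⟩ := hreach.exists_path_of_dist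
    exact ⟨p, hpath, hlen, le_trans (internalCount_le hpath X hu hv huv) (by omega)⟩

lemma pathGraph_partition_lb {n k : ℕ} {inst : DecidableEq (Fin n)}
    (Q : @Finpartition (Finset (Fin n)) (@Finset.instLattice (Fin n) inst)
      Finset.instOrderBot Finset.univ)
    (hQ : ∀ X ∈ Q.parts, MutVis (SimpleGraph.pathGraph n) X k) :
    (n + k + 1) / (k + 2) ≤ Q.parts.card := by
  have hk2 : 0 < k + 2 := by omega
  have hsum : ∑ X ∈ Q.parts, X.card = n := by
    rw [Q.sum_card_parts, Finset.card_univ, Fintype.card_fin]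
  have hle : ∑ X ∈ Q.parts, X.card ≤ Q.parts.card • (k + 2) :=
    Finset.sum_le_card_nsmul _ _ _ (fun X hX => (mutVis_pathGraph_iff X).1 (hQ X hX))
  rw [smul_eq_mul] at hle
  have h' : n ≤ (k + 2) * Q.parts.card := by rw [mul_comm]; omega
  rw [Nat.div_le_iff_le_mul_add_pred hk2]
  have h2 : n + (k + 1) ≤ (k + 2) * Q.parts.card + (k + 1) := Nat.add_le_add_right h' _
  simpa [Nat.add_assoc] using h2

lemma pathGraph_partition_ub (n k : ℕ) (hn : 1 ≤ n) {inst : DecidableEq (Fin n)} :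
    ∃ P : @Finpartition (Finset (Fin n)) (@Finset.instLattice (Fin n) inst)
      Finset.instOrderBot Finset.univ,
      (∀ X ∈ P.parts, MutVis (SimpleGraph.pathGraph n) X k) ∧
      P.parts.card = (n + k + 1) / (k + 2) := by
  letI := inst
  have hk2 : 0 < k + 2 := by omega
  set m := (n + k + 1) / (k + 2) with hm
  have hm' : m = (n - 1) / (k + 2) + 1 := by
    rw [hm, show n + k + 1 = (n - 1) + (k + 2) by omega, Nat.add_div_right _ hk2]
  set fiber : ℕ → Finset (Fin n) :=
    fun j => Finset.univ.filter (fun i => i.val / (k + 2) = j) with hfiber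
  have hmemfib : ∀ (a : Fin n) (j : ℕ), a ∈ fiber j ↔ a.val / (k + 2) = j := by
    intro a j
    rw [hfiber]
    simp
  have hdivlt : ∀ i : Fin n, i.val / (k + 2) < m := by
    intro i
    rw [hm']
    have : i.val / (k + 2) ≤ (n - 1) / (k + 2) :=
      Nat.div_le_div_right (by omega)
    omega
  have hjlt : ∀ j < m, j * (k + 2) < n := by
    intro j hj
    have h1 : j ≤ (n - 1) / (k + 2) := by omega
    have h2 : j * (k + 2) ≤ ((n - 1) / (k + 2)) * (k + 2) :=
      Nat.mul_le_mul_right _ h1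
    have h3 : ((n - 1) / (k + 2)) * (k + 2) ≤ n - 1 := Nat.div_mul_le_self _ _
    omega
  have hwit : ∀ j (hj : j < m), (⟨j * (k + 2), hjlt j hj⟩ : Fin n) ∈ fiber j := by
    intro j hj
    rw [hmemfib]
    exact Nat.mul_div_cancel _ hk2
  have hcardfib : ∀ j, (fiber j).card ≤ k + 2 := by
    intro j
    refine le_trans (Finset.card_le_card_of_injOn (s := fiber j)
      (t := Finset.range (k + 2)) (fun i : Fin n => i.val % (k + 2))
      (fun i _ => Finset.mem_range.2 (Nat.mod_lt _ hk2)) ?_) (by simp)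
    intro a ha b hb hab
    rw [Finset.mem_coe, hmemfib] at ha hb
    have h1 := Nat.div_add_mod a.val (k + 2)
    have h2 := Nat.div_add_mod b.val (k + 2)
    apply Fin.ext
    simp only at hab
    rw [← h1, ← h2, ha, hb, hab]
  have hdisj : ∀ j1 j2, j1 ≠ j2 → Disjoint (fiber j1) (fiber j2) := by
    intro j1 j2 hne
    rw [Finset.disjoint_left]
    intro i hi1 hi2
    rw [hmemfib] at hi1 hi2
    exact hne (hi1 ▸ hi2 ▸ rfl)
  refine ⟨⟨(Finset.range m).image fiber, ?_, ?_, ?_⟩, ?_, ?_⟩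
  · rw [Finset.supIndep_iff_pairwiseDisjoint]
    intro a ha b hb hab
    simp only [Finset.coe_image, Set.mem_image, Finset.mem_coe,
      Finset.mem_range] at ha hb
    obtain ⟨j1, hj1, rfl⟩ := ha
    obtain ⟨j2, hj2, rfl⟩ := hb
    exact hdisj j1 j2 (fun h => hab (h ▸ rfl))
  · apply le_antisymm (Finset.sup_le fun X _ => Finset.subset_univ X)
    intro i _
    rw [Finset.mem_sup]
    refine ⟨fiber (i.val / (k + 2)),
      Finset.mem_image.2 ⟨_, Finset.mem_range.2 (hdivlt i), rfl⟩, ?_⟩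
    simp only [id_eq]
    rw [hmemfib]
  · intro hbot
    obtain ⟨j, hj, hjj⟩ := Finset.mem_image.1 hbot
    rw [Finset.mem_range] at hj
    have hw := hwit j hj
    rw [hjj] at hw
    exact absurd hw (by simp)
  · intro X hX
    obtain ⟨j, _, rfl⟩ := Finset.mem_image.1 hX
    exact (mutVis_pathGraph_iff _).2 (hcardfib j)
  · show ((Finset.range m).image fiber).card = m
    have hinj : Set.InjOn fiber (Finset.range m : Set ℕ) := by
      intro j1 hj1 j2 hj2 heq
      simp only [Finset.coe_range, Set.mem_Iio] at hj1 hj2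
      by_contra hne
      exact (Finset.disjoint_left.1 (hdisj j1 j2 hne) (hwit j1 hj1)) (heq ▸ hwit j1 hj1)
    rw [Finset.card_image_of_injOn hinj, Finset.card_range]

theorem stmt18 (n k : ℕ) (hn : 1 ≤ n) :
    tauK (SimpleGraph.pathGraph n) k = (n + k + 1) / (k + 2) := by
  unfold tauK
  apply le_antisymm
  · apply Nat.sInf_le
    exact pathGraph_partition_ub n k hn
  · apply le_csInf
    · obtain ⟨P, h1, h2⟩ := pathGraph_partition_ub n k hn
        (inst := fun a b => Classical.propDecidable (a = b))
      exact ⟨_, P, h1, h2⟩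
    · rintro c ⟨Q, hQ, rfl⟩
      exact pathGraph_partition_lb Q hQ
end
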